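/- arXiv:1207.2848 — 4 statements merged into one kernel-verified Lean document; each statement's English description precedes it below -/
import Mathlib

section
/- A consumer's optimal oblivious value is asymptotically achieved in the n-consumer game under a DOE strategy: if all consumers (including i) use a DOE strategy ν of the continuum game, then lim_{n→∞} ( Ṽ_{i,0}(x₀, s₀ | ν, ν) − Vⁿ_{i,0}(x₀, s₀ | ν, ν) ) = 0 for every s₀ ∈ 𝒮 and x₀ ∈ 𝒳₀. -/
/-!
Dynamic pricing model of Tsitsiklis and Xu, "Pricing of Fluctuations in
Electricity Markets".

* `S` : finite exogenous state space, evolving as a Markov chain with kernel `K`;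
* `X0` : finite set of consumer types, with type distribution `eta s0` given the
  initial exogenous state `s0`;
* actions lie in `[0, B]`, internal states in `[0, Zbd]`, updated by `r`;
* `U t x z s a` : stage utility; `Cc`, `Hc0`, `Hc` : continuum primary and
  ancillary cost functions, with (partial) derivatives `dC`, `dH0`, `dH1`
  (w.r.t. the first demand argument) and `dH2` (w.r.t. the second).
In the `n`-consumer model the costs scale as `Cⁿ(A,s) = n * Cc (A/n) s` etc., so
the `n`-consumer prices are the continuum marginal costs evaluated at the
per-capita demand `A / n`.
-/

noncomputable section

structure ElecModel (S : Type*) (X0 : Type*) [Fintype S] [DecidableEq S] [Fintype X0] where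
  T : ℕ
  B : ℝ
  B_pos : 0 < B
  Zbd : ℝ
  K : S → S → ℝ
  K_nonneg : ∀ s s', 0 ≤ K s s'
  K_sum : ∀ s, ∑ s' : S, K s s' = 1
  eta : S → X0 → ℝ
  eta_nonneg : ∀ s x, 0 ≤ eta s x
  eta_sum : ∀ s, ∑ x : X0, eta s x = 1
  r : X0 → ℝ → ℝ → S → ℝ
  U : ℕ → X0 → ℝ → S → ℝ → ℝ
  Cc : ℝ → S → ℝ
  Hc0 : ℝ → S → ℝ
  Hc : ℝ → ℝ → S → S → ℝ
  dC : ℝ → S → ℝ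
  dH0 : ℝ → S → ℝ
  dH1 : ℝ → ℝ → S → S → ℝ
  dH2 : ℝ → ℝ → S → S → ℝ

namespace ElecModel

variable {S : Type*} {X0 : Type*} [Fintype S] [DecidableEq S] [Fintype X0] [DecidableEq X0]

/-- A dynamic oblivious strategy: the action depends only on the consumer's type and
the history of exogenous states up to the current stage. -/
structure OblStrategy (M : ElecModel S X0) where
  act : ℕ → X0 → (ℕ → S) → ℝ
  act_mem : ∀ t x h, act t x h ∈ Set.Icc (0 : ℝ) M.B
  act_prefix : ∀ t x h h', (∀ τ ≤ t, h τ = h' τ) → act t x h = act t x h'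

/-- A history-dependent strategy: the action depends on the consumer's augmented state
`(previous action, type, internal state)`, the history of exogenous states up to the
current stage, and the empirical distribution (as a multiset) of the other consumers'
augmented states. -/
structure HistStrategy (M : ElecModel S X0) where
  act : ℕ → ℝ × X0 × ℝ → (ℕ → S) → Multiset (ℝ × X0 × ℝ) → ℝ
  act_mem : ∀ t y h f, act t y h f ∈ Set.Icc (0 : ℝ) M.B
  act_prefix : ∀ t y h h' f, (∀ τ ≤ t, h τ = h' τ) → act t y h f = act t y h' f

/-- Probability of the Markov chain of exogenous states following `h` on stages `0,…,T`,
starting from `s0`. -/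
def histProb (M : ElecModel S X0) (s0 : S) (h : ℕ → S) : ℝ :=
  (if h 0 = s0 then (1 : ℝ) else 0) * ∏ t ∈ Finset.range M.T, M.K (h t) (h (t + 1))

def extendHist (M : ElecModel S X0) (g : Fin (M.T + 1) → S) : ℕ → S :=
  fun n => g ⟨min n M.T, Nat.lt_succ_of_le (min_le_right n M.T)⟩

/-- Expectation, over the Markov histories of exogenous states starting at `s0`,
of a function of the history. -/
def expectHist (M : ElecModel S X0) (s0 : S) (F : (ℕ → S) → ℝ) : ℝ :=
  ∑ g : Fin (M.T + 1) → S, M.histProb s0 (M.extendHist g) * F (M.extendHist g)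

/-- The internal state trajectory of a consumer of type `x` along history `h`
under the action sequence `a` : `z 0 = 0`, `z (t+1) = r x (z t) (a t) (h (t+1))`. -/
def zTraj (M : ElecModel S X0) (x : X0) (h : ℕ → S) (a : ℕ → ℝ) : ℕ → ℝ
  | 0 => 0
  | t + 1 => M.zTraj x h a t |> fun z => M.r x z (a t) (h (t + 1))

/-- Average (per-capita) demand in the continuum model under the oblivious strategy `ν`. -/
def avgDemand (M : ElecModel S X0) (ν : OblStrategy M) (s0 : S) (h : ℕ → S) (t : ℕ) : ℝ :=
  ∑ x : X0, M.eta s0 x * ν.act t x h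

/-- Continuum price `p̃_t`. -/
def pTil (M : ElecModel S X0) (ν : OblStrategy M) (s0 : S) (h : ℕ → S) (t : ℕ) : ℝ :=
  M.dC (M.avgDemand ν s0 h t) (h t)

/-- Continuum price `w̃_t`. -/
def wTil (M : ElecModel S X0) (ν : OblStrategy M) (s0 : S) (h : ℕ → S) : ℕ → ℝ
  | 0 => M.dH0 (M.avgDemand ν s0 h 0) (h 0)
  | t + 1 => M.dH2 (M.avgDemand ν s0 h t) (M.avgDemand ν s0 h (t + 1)) (h t) (h (t + 1))

/-- Continuum price `q̃_t` (charged on the previous stage's demand). -/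
def qTil (M : ElecModel S X0) (ν : OblStrategy M) (s0 : S) (h : ℕ → S) : ℕ → ℝ
  | 0 => 0
  | t + 1 => M.dH1 (M.avgDemand ν s0 h t) (M.avgDemand ν s0 h (t + 1)) (h t) (h (t + 1))

/-- Total oblivious stage value along a history: consumer of type `x` follows `νhat`,
prices are induced by `ν`. -/
def oblStageSum (M : ElecModel S X0) (νhat ν : OblStrategy M) (s0 : S) (x : X0)
    (h : ℕ → S) : ℝ :=
  ∑ t ∈ Finset.range (M.T + 1),
    (M.U t x (M.zTraj x h (fun τ => νhat.act τ x h) t) (h t) (νhat.act t x h)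
      - (M.pTil ν s0 h t + M.wTil ν s0 h t) * νhat.act t x h
      - M.qTil ν s0 h t * (if t = 0 then 0 else νhat.act (t - 1) x h))

/-- Oblivious value function `Ṽ_{i,0}(x₀, s₀ ∣ ν̂, ν)`. -/
def oblValue (M : ElecModel S X0) (νhat ν : OblStrategy M) (x0 : X0) (s0 : S) : ℝ :=
  M.expectHist s0 (fun h => M.oblStageSum νhat ν s0 x0 h)

/-- A Dynamic Oblivious Equilibrium. -/
def IsDOE (M : ElecModel S X0) (ν : OblStrategy M) : Prop :=
  ∀ (νhat : OblStrategy M) (x0 : X0) (s0 : S),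
    M.oblValue νhat ν x0 s0 ≤ M.oblValue ν ν x0 s0

/-- The previous action of a consumer following the oblivious strategy `ν` (zero at stage 0). -/
def prevActObl (M : ElecModel S X0) (ν : OblStrategy M) (x : X0) (h : ℕ → S) : ℕ → ℝ
  | 0 => 0
  | t + 1 => ν.act t x h

/-- The empirical distribution (multiset) of the augmented states of the `m` consumers
other than `i`, all following the oblivious strategy `ν`, with type profile `ω`. -/
def othersAug (M : ElecModel S X0) (m : ℕ) (ν : OblStrategy M) (ω : Fin m → X0)
    (h : ℕ → S) (t : ℕ) : Multiset (ℝ × X0 × ℝ) :=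
  (Finset.univ : Finset (Fin m)).val.map
    (fun j => (M.prevActObl ν (ω j) h t, ω j, M.zTraj (ω j) h (fun τ => ν.act τ (ω j) h) t))

/-- Consumer `i`'s trajectory `(action at t, internal state at t)` in the `(m+1)`-consumer
game when she plays the history-dependent strategy `κ` while the `m` other consumers
(with type profile `ω`) play the oblivious strategy `ν`. -/
def iTraj (M : ElecModel S X0) (m : ℕ) (κ : HistStrategy M) (ν : OblStrategy M)
    (x0 : X0) (ω : Fin m → X0) (h : ℕ → S) : ℕ → ℝ × ℝ
  | 0 => (κ.act 0 ((0 : ℝ), x0, (0 : ℝ)) h (M.othersAug m ν ω h 0), 0)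
  | t + 1 =>
      M.iTraj m κ ν x0 ω h t |> fun prev =>
        (M.r x0 prev.2 prev.1 (h (t + 1))) |> fun z' =>
          (κ.act (t + 1) (prev.1, x0, z') h (M.othersAug m ν ω h (t + 1)), z')

/-- Aggregate demand in the `(m+1)`-consumer game. -/
def aggDemandN (M : ElecModel S X0) (m : ℕ) (κ : HistStrategy M) (ν : OblStrategy M)
    (x0 : X0) (ω : Fin m → X0) (h : ℕ → S) (t : ℕ) : ℝ :=
  (M.iTraj m κ ν x0 ω h t).1 + ∑ j : Fin m, ν.act t (ω j) h

/-- `n`-consumer price `p_t = (Cⁿ)'(A_t, s_t) = C̃'(A_t/n, s_t)`, with `n = m+1`. -/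
def pN (M : ElecModel S X0) (m : ℕ) (κ : HistStrategy M) (ν : OblStrategy M)
    (x0 : X0) (ω : Fin m → X0) (h : ℕ → S) (t : ℕ) : ℝ :=
  M.dC (M.aggDemandN m κ ν x0 ω h t / ((m : ℝ) + 1)) (h t)

/-- `n`-consumer price `w_t`, with `n = m+1`. -/
def wN (M : ElecModel S X0) (m : ℕ) (κ : HistStrategy M) (ν : OblStrategy M)
    (x0 : X0) (ω : Fin m → X0) (h : ℕ → S) : ℕ → ℝ
  | 0 => M.dH0 (M.aggDemandN m κ ν x0 ω h 0 / ((m : ℝ) + 1)) (h 0)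
  | t + 1 =>
      M.dH2 (M.aggDemandN m κ ν x0 ω h t / ((m : ℝ) + 1))
        (M.aggDemandN m κ ν x0 ω h (t + 1) / ((m : ℝ) + 1)) (h t) (h (t + 1))

/-- `n`-consumer price `q_t` (charged on the previous stage's demand), with `n = m+1`. -/
def qN (M : ElecModel S X0) (m : ℕ) (κ : HistStrategy M) (ν : OblStrategy M)
    (x0 : X0) (ω : Fin m → X0) (h : ℕ → S) : ℕ → ℝ
  | 0 => 0
  | t + 1 =>
      M.dH1 (M.aggDemandN m κ ν x0 ω h t / ((m : ℝ) + 1))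
        (M.aggDemandN m κ ν x0 ω h (t + 1) / ((m : ℝ) + 1)) (h t) (h (t + 1))

/-- Consumer `i`'s total payoff along the history `h`. -/
def iPayoff (M : ElecModel S X0) (m : ℕ) (κ : HistStrategy M) (ν : OblStrategy M)
    (x0 : X0) (ω : Fin m → X0) (h : ℕ → S) : ℝ :=
  ∑ t ∈ Finset.range (M.T + 1),
    (M.U t x0 (M.iTraj m κ ν x0 ω h t).2 (h t) (M.iTraj m κ ν x0 ω h t).1
      - (M.pN m κ ν x0 ω h t + M.wN m κ ν x0 ω h t) * (M.iTraj m κ ν x0 ω h t).1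
      - M.qN m κ ν x0 ω h t * (if t = 0 then 0 else (M.iTraj m κ ν x0 ω h (t - 1)).1))

/-- Consumer `i`'s expected payoff `Vⁿ_{i,0}(x₀, s₀ ∣ κ, ν)` in the `(m+1)`-consumer game:
the other `m` consumers' types are drawn i.i.d. from `eta s0` and all of them use `ν`. -/
def Vn (M : ElecModel S X0) (m : ℕ) (κ : HistStrategy M) (ν : OblStrategy M)
    (x0 : X0) (s0 : S) : ℝ :=
  ∑ ω : Fin m → X0, (∏ j : Fin m, M.eta s0 (ω j)) *
    M.expectHist s0 (fun h => M.iPayoff m κ ν x0 ω h)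

/-- An oblivious strategy regarded as a history-dependent strategy. -/
def OblStrategy.toHist {M : ElecModel S X0} (ν : OblStrategy M) : HistStrategy M where
  act := fun t y h _ => ν.act t y.2.1 h
  act_mem := fun t y h _ => ν.act_mem t y.2.1 h
  act_prefix := fun t y h h' _ hp => ν.act_prefix t y.2.1 h h' hp

/-- Stage social welfare in the continuum model. -/
def contStageWelfare (M : ElecModel S X0) (ν : OblStrategy M) (s0 : S) (h : ℕ → S)
    (t : ℕ) : ℝ :=
  (∑ x : X0, M.eta s0 x *
      M.U t x (M.zTraj x h (fun τ => ν.act τ x h) t) (h t) (ν.act t x h))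
    - M.Cc (M.avgDemand ν s0 h t) (h t)
    - (if t = 0 then M.Hc0 (M.avgDemand ν s0 h 0) (h 0)
        else M.Hc (M.avgDemand ν s0 h (t - 1)) (M.avgDemand ν s0 h t) (h (t - 1)) (h t))

/-- Expected social welfare `W̃₀(s₀ ∣ ν)` in the continuum model. -/
def contWelfare (M : ElecModel S X0) (ν : OblStrategy M) (s0 : S) : ℝ :=
  M.expectHist s0 (fun h => ∑ t ∈ Finset.range (M.T + 1), M.contStageWelfare ν s0 h t)

/-- Joint trajectory `(action at t, internal state at t)` of the `n` consumers with type
profile `ω` when all of them use the history-dependent strategy `κ`. -/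
def jointTraj (M : ElecModel S X0) (n : ℕ) (κ : HistStrategy M) (ω : Fin n → X0)
    (h : ℕ → S) : ℕ → Fin n → ℝ × ℝ
  | 0 => fun i =>
      (κ.act 0 ((0 : ℝ), ω i, (0 : ℝ)) h
        (((Finset.univ : Finset (Fin n)).erase i).val.map fun j => ((0 : ℝ), ω j, (0 : ℝ))), 0)
  | t + 1 => fun i =>
      M.jointTraj n κ ω h t |> fun prev =>
        (fun j : Fin n => ((prev j).1, ω j, M.r (ω j) (prev j).2 (prev j).1 (h (t + 1))))
          |> fun aug =>
            (κ.act (t + 1) (aug i) h (((Finset.univ : Finset (Fin n)).erase i).val.map aug),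
              M.r (ω i) (prev i).2 (prev i).1 (h (t + 1)))

/-- Aggregate demand in the `n`-consumer game when everyone uses `κ`. -/
def aggDemandAll (M : ElecModel S X0) (n : ℕ) (κ : HistStrategy M) (ω : Fin n → X0)
    (h : ℕ → S) (t : ℕ) : ℝ :=
  ∑ i : Fin n, (M.jointTraj n κ ω h t i).1

/-- Realized total social welfare along the history `h` in the `n`-consumer game under the
symmetric strategy profile `(κ,…,κ)`; the `n`-consumer costs are `n * C̃(A/n)` etc. -/
def welfProfile (M : ElecModel S X0) (n : ℕ) (κ : HistStrategy M) (ω : Fin n → X0)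
    (h : ℕ → S) : ℝ :=
  ∑ t ∈ Finset.range (M.T + 1),
    ((∑ i : Fin n, M.U t (ω i) (M.jointTraj n κ ω h t i).2 (h t) (M.jointTraj n κ ω h t i).1)
      - (n : ℝ) * M.Cc (M.aggDemandAll n κ ω h t / n) (h t)
      - (if t = 0 then (n : ℝ) * M.Hc0 (M.aggDemandAll n κ ω h 0 / n) (h 0)
          else (n : ℝ) * M.Hc (M.aggDemandAll n κ ω h (t - 1) / n)
                 (M.aggDemandAll n κ ω h t / n) (h (t - 1)) (h t)))

/-- Expected social welfare `𝒲ⁿ₀` in the `n`-consumer game under the symmetric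
profile `(κ,…,κ)`, the expectation taken over the i.i.d. consumer types
(equivalently, over the initial population state) and the Markov exogenous states. -/
def expWelfN (M : ElecModel S X0) (n : ℕ) (κ : HistStrategy M) (s0 : S) : ℝ :=
  ∑ ω : Fin n → X0, (∏ i : Fin n, M.eta s0 (ω i)) *
    M.expectHist s0 (fun h => M.welfProfile n κ ω h)

/-- Cumulative utility `Ū_{h_T}(x₀, a₀, …, a_T)` of a type-`x₀` consumer along history `h`
as a function of her action sequence, the internal states being generated by `r`. -/
def cumUtility (M : ElecModel S X0) (x0 : X0) (h : ℕ → S) (a : ℕ → ℝ) : ℝ :=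
  ∑ t ∈ Finset.range (M.T + 1), M.U t x0 (M.zTraj x0 h a t) (h t) (a t)

/-- The initial population state (empirical type distribution) of the type profile `ω`. -/
def popState (n : ℕ) (ω : Fin n → X0) (x : X0) : ℝ :=
  ((Finset.univ.filter fun i => ω i = x).card : ℝ) / n

/-- Assumptions 1–3 of the paper: differentiability of the cost functions, monotone
primary cost, marginal costs bounded by `P` and uniformly equicontinuous on `[0,∞)`,
utilities with values in `[0,Q]` and continuous in the action, internal states
staying in `[0, Zbd]`. -/
structure RegularAssumptions (M : ElecModel S X0) (P Q : ℝ) : Prop where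
  deriv_C : ∀ s : S, ∀ A ∈ Set.Ici (0 : ℝ),
    HasDerivWithinAt (fun u => M.Cc u s) (M.dC A s) (Set.Ici 0) A
  deriv_H0 : ∀ s : S, ∀ A ∈ Set.Ici (0 : ℝ),
    HasDerivWithinAt (fun u => M.Hc0 u s) (M.dH0 A s) (Set.Ici 0) A
  deriv_H1 : ∀ (s s' : S) (A' : ℝ), ∀ A ∈ Set.Ici (0 : ℝ),
    HasDerivWithinAt (fun u => M.Hc u A' s s') (M.dH1 A A' s s') (Set.Ici 0) A
  deriv_H2 : ∀ (s s' : S) (A : ℝ), ∀ A' ∈ Set.Ici (0 : ℝ),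
    HasDerivWithinAt (fun u => M.Hc A u s s') (M.dH2 A A' s s') (Set.Ici 0) A'
  C_mono : ∀ s : S, MonotoneOn (fun u => M.Cc u s) (Set.Ici 0)
  bound_C : ∀ s : S, ∀ A ∈ Set.Ici (0 : ℝ), |M.dC A s| ≤ P
  bound_H0 : ∀ s : S, ∀ A ∈ Set.Ici (0 : ℝ), |M.dH0 A s| ≤ P
  bound_H1 : ∀ (s s' : S), ∀ A' ∈ Set.Icc (0 : ℝ) M.B, ∀ A ∈ Set.Ici (0 : ℝ),
    |M.dH1 A A' s s'| ≤ P
  bound_H2 : ∀ (s s' : S), ∀ A' ∈ Set.Icc (0 : ℝ) M.B, ∀ A ∈ Set.Ici (0 : ℝ),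
    |M.dH2 A' A s s'| ≤ P
  equicont_C : ∀ ε > (0 : ℝ), ∃ δ > (0 : ℝ), ∀ s : S, ∀ A ∈ Set.Ici (0 : ℝ),
    ∀ A2 ∈ Set.Ici (0 : ℝ), |A - A2| ≤ δ → |M.dC A s - M.dC A2 s| ≤ ε
  equicont_H0 : ∀ ε > (0 : ℝ), ∃ δ > (0 : ℝ), ∀ s : S, ∀ A ∈ Set.Ici (0 : ℝ),
    ∀ A2 ∈ Set.Ici (0 : ℝ), |A - A2| ≤ δ → |M.dH0 A s - M.dH0 A2 s| ≤ ε
  equicont_H1 : ∀ ε > (0 : ℝ), ∃ δ > (0 : ℝ), ∀ (s s' : S), ∀ A' ∈ Set.Icc (0 : ℝ) M.B,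
    ∀ A ∈ Set.Ici (0 : ℝ), ∀ A2 ∈ Set.Ici (0 : ℝ),
      |A - A2| ≤ δ → |M.dH1 A A' s s' - M.dH1 A2 A' s s'| ≤ ε
  equicont_H2 : ∀ ε > (0 : ℝ), ∃ δ > (0 : ℝ), ∀ (s s' : S), ∀ A' ∈ Set.Icc (0 : ℝ) M.B,
    ∀ A ∈ Set.Ici (0 : ℝ), ∀ A2 ∈ Set.Ici (0 : ℝ),
      |A - A2| ≤ δ → |M.dH2 A' A s s' - M.dH2 A' A2 s s'| ≤ ε
  U_bounds : ∀ (t : ℕ) (x : X0) (z : ℝ) (s : S) (a : ℝ), M.U t x z s a ∈ Set.Icc (0 : ℝ) Q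
  U_cont : ∀ (t : ℕ) (x : X0) (z : ℝ) (s : S), Continuous fun a => M.U t x z s a
  Zbd_nonneg : 0 ≤ M.Zbd
  r_mem : ∀ (x : X0) (z a : ℝ) (s' : S), z ∈ Set.Icc (0 : ℝ) M.Zbd →
    a ∈ Set.Icc (0 : ℝ) M.B → M.r x z a s' ∈ Set.Icc (0 : ℝ) M.Zbd

/-- Assumption 4 of the paper (convexity): convex costs, concave cumulative utility,
monotone internal-state maps with one-sided derivatives, and utilities with one-sided
derivatives in the internal state. -/
structure ConvexAssumptions (M : ElecModel S X0) : Prop where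
  C_convex : ∀ s : S, ConvexOn ℝ Set.univ (fun A => M.Cc A s)
  H_convex : ∀ s s' : S, ConvexOn ℝ Set.univ (fun p : ℝ × ℝ => M.Hc p.1 p.2 s s')
  cumU_concave : ∀ (x0 : X0) (h : ℕ → S),
    ConcaveOn ℝ {a : ℕ → ℝ | ∀ t, a t ∈ Set.Icc (0 : ℝ) M.B} (fun a => M.cumUtility x0 h a)
  k_monotone : ∀ (x0 : X0) (h : ℕ → S) (t τ : ℕ), τ < t → ∀ a : ℕ → ℝ,
    Monotone (fun u => M.zTraj x0 h (Function.update a τ u) t) ∨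
      Antitone (fun u => M.zTraj x0 h (Function.update a τ u) t)
  k_onesided : ∀ (x0 : X0) (h : ℕ → S) (t τ : ℕ) (a : ℕ → ℝ) (u : ℝ),
    (∃ d, HasDerivWithinAt (fun v => M.zTraj x0 h (Function.update a τ v) t) d (Set.Ici u) u) ∧
    (∃ d, HasDerivWithinAt (fun v => M.zTraj x0 h (Function.update a τ v) t) d (Set.Iic u) u)
  U_z_onesided : ∀ (t : ℕ) (x : X0) (s : S) (a z : ℝ),
    (∃ d, HasDerivWithinAt (fun z' => M.U t x z' s a) d (Set.Ici z) z) ∧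
    (∃ d, HasDerivWithinAt (fun z' => M.U t x z' s a) d (Set.Iic z) z)

end ElecModel
namespace ElecAux

open ElecModel Finset

lemma quant_bound {f : ℝ → ℝ} {D : Set ℝ} {P ε δ v : ℝ} (hP : 0 ≤ P) (hδ : 0 < δ) (hε : 0 ≤ ε)
    (hb : ∀ u ∈ D, |f u| ≤ P) (hv : v ∈ D)
    (hec : ∀ u ∈ D, |u - v| ≤ δ → |f u - f v| ≤ ε) :
    ∀ u ∈ D, |f u - f v| ≤ ε + (2 * P / δ ^ 2) * (u - v) ^ 2 := by
  intro u hu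
  rcases le_or_gt (|u - v|) δ with hle | hgt
  · have h1 := hec u hu hle
    have h2 : 0 ≤ (2 * P / δ ^ 2) * (u - v) ^ 2 := by positivity
    linarith
  · have h1 : δ ^ 2 < (u - v) ^ 2 := by
      have := abs_nonneg (u - v)
      nlinarith [sq_abs (u - v)]
    have h2 : |f u - f v| ≤ 2 * P :=
      le_trans (abs_sub _ _) (by linarith [hb u hu, hb v hv])
    have h3 : 2 * P ≤ (2 * P / δ ^ 2) * (u - v) ^ 2 := by
      rw [div_mul_eq_mul_div, le_div_iff₀ (by positivity)]
      nlinarith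
    linarith

variable {S : Type*} {X0 : Type*} [Fintype S] [DecidableEq S] [Fintype X0] [DecidableEq X0]

lemma sum_prod_eta (M : ElecModel S X0) (s0 : S) (m : ℕ) :
    ∑ ω : Fin m → X0, ∏ j, M.eta s0 (ω j) = 1 := by
  have h := Finset.prod_univ_sum (fun _ : Fin m => (Finset.univ : Finset X0))
    (fun _ x => M.eta s0 x)
  rw [Fintype.piFinset_univ] at h
  rw [← h]
  simp [M.eta_sum s0]

lemma sum_prod_mul {m : ℕ} (η g : X0 → ℝ) (hη1 : ∑ x, η x = 1) (hg0 : ∑ x, η x * g x = 0)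
    (j k : Fin m) :
    ∑ ω : Fin m → X0, (∏ l, η (ω l)) * (g (ω j) * g (ω k)) =
      if j = k then ∑ x, η x * g x ^ 2 else 0 := by
  have key : ∀ ω : Fin m → X0, (∏ l, η (ω l)) * (g (ω j) * g (ω k))
      = ∏ l, (η (ω l) * ((if l = j then g (ω l) else 1) * (if l = k then g (ω l) else 1))) := by
    intro ω
    rw [Finset.prod_mul_distrib, Finset.prod_mul_distrib,
      Finset.prod_ite_eq' Finset.univ j (fun l => g (ω l)),
      Finset.prod_ite_eq' Finset.univ k (fun l => g (ω l))]
    simp [mul_assoc]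
  simp_rw [key]
  have h := Finset.prod_univ_sum (fun _ : Fin m => (Finset.univ : Finset X0))
      (fun l x => η x * ((if l = j then g x else 1) * (if l = k then g x else 1)))
  rw [Fintype.piFinset_univ] at h
  rw [← h]
  by_cases hjk : j = k
  · subst hjk
    have hfac : ∀ l : Fin m, (∑ x, η x * ((if l = j then g x else 1) * (if l = j then g x else 1)))
        = if l = j then ∑ x, η x * g x ^ 2 else 1 := by
      intro l
      by_cases hl : l = j
      · simp only [hl, if_true]
        exact Finset.sum_congr rfl fun x _ => by ring
      · simp [hl, hη1]
    simp_rw [hfac]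
    rw [Finset.prod_ite_eq' Finset.univ j (fun _ => ∑ x, η x * g x ^ 2)]
    simp
  · rw [if_neg hjk]
    apply Finset.prod_eq_zero (Finset.mem_univ j)
    simp only [if_pos rfl, if_neg hjk]
    simpa [mul_comm] using hg0

set_option linter.unusedSectionVars false in
lemma second_moment (M : ElecModel S X0) (s0 : S) (m : ℕ) (f : X0 → ℝ) (a0 : ℝ)
    (hf : ∀ x, f x ∈ Set.Icc (0:ℝ) M.B) (ha0 : a0 ∈ Set.Icc (0:ℝ) M.B) :
    ∑ ω : Fin m → X0, (∏ l, M.eta s0 (ω l)) *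
      ((a0 + ∑ j, f (ω j)) / ((m : ℝ) + 1) - ∑ x, M.eta s0 x * f x) ^ 2
      ≤ 2 * M.B ^ 2 / ((m : ℝ) + 1) := by
  set η := M.eta s0 with hη
  have hη0 : ∀ x, 0 ≤ η x := fun x => M.eta_nonneg s0 x
  have hη1 : ∑ x, η x = 1 := M.eta_sum s0
  set μ := ∑ x, η x * f x with hμ
  have hμ0 : 0 ≤ μ := Finset.sum_nonneg fun x _ => mul_nonneg (hη0 x) (hf x).1
  have hμB : μ ≤ M.B := by
    calc μ ≤ ∑ x, η x * M.B := Finset.sum_le_sum fun x _ =>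
              mul_le_mul_of_nonneg_left (hf x).2 (hη0 x)
    _ = M.B := by rw [← Finset.sum_mul, hη1, one_mul]
  set g : X0 → ℝ := fun x => f x - μ with hg
  have hg0 : ∑ x, η x * g x = 0 := by
    simp only [hg, mul_sub, Finset.sum_sub_distrib, ← Finset.sum_mul, hη1, one_mul]
    simp [← hμ]
  have hgB : ∀ x, |g x| ≤ M.B := by
    intro x
    simp only [hg]
    rw [abs_le]
    constructor <;> [linarith [(hf x).1, hμB]; linarith [(hf x).2, hμ0]]
  set V := ∑ x, η x * g x ^ 2 with hV
  have hVB : V ≤ M.B ^ 2 := by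
    calc V ≤ ∑ x, η x * M.B ^ 2 := Finset.sum_le_sum fun x _ => by
              have := hgB x
              have h2 : g x ^ 2 ≤ M.B ^ 2 := by nlinarith [sq_abs (g x), abs_nonneg (g x)]
              exact mul_le_mul_of_nonneg_left h2 (hη0 x)
    _ = M.B ^ 2 := by rw [← Finset.sum_mul, hη1, one_mul]
  have hV0 : 0 ≤ V := Finset.sum_nonneg fun x _ => mul_nonneg (hη0 x) (sq_nonneg _)
  have hw0 : ∀ ω : Fin m → X0, 0 ≤ ∏ l, η (ω l) :=
    fun ω => Finset.prod_nonneg fun l _ => hη0 (ω l)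
  -- second moment of the centered sum
  have hSsq : ∑ ω : Fin m → X0, (∏ l, η (ω l)) * (∑ j, g (ω j)) ^ 2 = m * V := by
    have expand : ∀ ω : Fin m → X0, (∑ j, g (ω j)) ^ 2 = ∑ j, ∑ k, g (ω j) * g (ω k) := by
      intro ω; rw [sq, Finset.sum_mul_sum]
    simp_rw [expand, Finset.mul_sum]
    rw [Finset.sum_comm]
    have hinner : ∀ j : Fin m,
        ∑ ω : Fin m → X0, ∑ k, (∏ l, η (ω l)) * (g (ω j) * g (ω k)) = V := by
      intro j
      rw [Finset.sum_comm]
      have : ∀ k : Fin m, ∑ ω : Fin m → X0, (∏ l, η (ω l)) * (g (ω j) * g (ω k))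
          = if j = k then V else 0 := fun k => sum_prod_mul η g hη1 hg0 j k
      simp_rw [this]
      simp
    calc ∑ j : Fin m, ∑ ω : Fin m → X0, ∑ k, (∏ l, η (ω l)) * (g (ω j) * g (ω k))
        = ∑ j : Fin m, V := Finset.sum_congr rfl fun j _ => hinner j
    _ = m * V := by simp [mul_comm]
  have hm1 : (0:ℝ) < (m : ℝ) + 1 := by positivity
  -- pointwise bound
  have hpt : ∀ ω : Fin m → X0,
      ((a0 + ∑ j, f (ω j)) / ((m : ℝ) + 1) - μ) ^ 2
        ≤ (2 * (a0 - μ) ^ 2 + 2 * (∑ j, g (ω j)) ^ 2) / ((m : ℝ) + 1) ^ 2 := by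
    intro ω
    have hrw : (a0 + ∑ j, f (ω j)) / ((m : ℝ) + 1) - μ
        = ((a0 - μ) + ∑ j, g (ω j)) / ((m : ℝ) + 1) := by
      have hsg : ∑ j, g (ω j) = (∑ j, f (ω j)) - m * μ := by
        simp [hg, Finset.sum_sub_distrib, mul_comm]
      rw [hsg]
      field_simp
      ring
    rw [hrw, div_pow]
    apply div_le_div_of_nonneg_right _ (by positivity)
    nlinarith [sq_nonneg ((a0 - μ) - ∑ j, g (ω j))]
  calc ∑ ω : Fin m → X0, (∏ l, η (ω l)) *
        ((a0 + ∑ j, f (ω j)) / ((m : ℝ) + 1) - μ) ^ 2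
      ≤ ∑ ω : Fin m → X0, (∏ l, η (ω l)) *
        ((2 * (a0 - μ) ^ 2 + 2 * (∑ j, g (ω j)) ^ 2) / ((m : ℝ) + 1) ^ 2) :=
        Finset.sum_le_sum fun ω _ => mul_le_mul_of_nonneg_left (hpt ω) (hw0 ω)
    _ = ((∑ ω : Fin m → X0, ∏ l, η (ω l)) * (2 * (a0 - μ) ^ 2)
          + 2 * (∑ ω : Fin m → X0, (∏ l, η (ω l)) * (∑ j, g (ω j)) ^ 2)) / ((m : ℝ) + 1) ^ 2 := by
        have hD : ((m : ℝ) + 1) ^ 2 ≠ 0 := by positivity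
        rw [eq_div_iff hD, Finset.sum_mul]
        have hterm : ∀ ω : Fin m → X0,
            (∏ l, η (ω l)) * ((2 * (a0 - μ) ^ 2 + 2 * (∑ j, g (ω j)) ^ 2) / ((m : ℝ) + 1) ^ 2)
              * ((m : ℝ) + 1) ^ 2
            = (∏ l, η (ω l)) * (2 * (a0 - μ) ^ 2) + 2 * ((∏ l, η (ω l)) * (∑ j, g (ω j)) ^ 2) := by
          intro ω; field_simp
        simp_rw [hterm]
        rw [Finset.sum_add_distrib, ← Finset.sum_mul, ← Finset.mul_sum]
    _ ≤ 2 * M.B ^ 2 / ((m : ℝ) + 1) := by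
        rw [sum_prod_eta, hSsq, one_mul]
        rw [div_le_div_iff₀ (by positivity) hm1]
        have ha : (a0 - μ) ^ 2 ≤ M.B ^ 2 := by nlinarith [ha0.1, ha0.2]
        have hmV : (m : ℝ) * V ≤ (m : ℝ) * M.B ^ 2 :=
          mul_le_mul_of_nonneg_left hVB (by positivity)
        nlinarith
set_option linter.unusedSectionVars false in
/-- Continuity of `dH2` in its *first* argument, at a fixed point, via uniform
approximation by difference quotients. -/
lemma crossH2 {M : ElecModel S X0} {P Q : ℝ} (hreg : M.RegularAssumptions P Q)
    (s s' : S) {A' : ℝ} (hA' : 0 ≤ A') {v : ℝ} (hv : v ∈ Set.Icc (0:ℝ) M.B)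
    {ε : ℝ} (hε : 0 < ε) :
    ∃ δ > 0, ∀ u ∈ Set.Icc (0:ℝ) M.B, |u - v| ≤ δ →
      |M.dH2 u A' s s' - M.dH2 v A' s s'| ≤ ε := by
  obtain ⟨δ₂, hδ₂, hec⟩ := hreg.equicont_H2 (ε/3) (by linarith)
  set φ : ℝ → ℝ := fun u => (M.Hc u (A' + δ₂) s s' - M.Hc u A' s s') / δ₂ with hφ
  have happrox : ∀ u ∈ Set.Icc (0:ℝ) M.B, |φ u - M.dH2 u A' s s'| ≤ ε/3 := by
    intro u hu
    -- mean value theorem for `w ↦ Hc u w` on `[A', A' + δ₂]`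
    have hlt : A' < A' + δ₂ := by linarith
    have hcont : ContinuousOn (fun w => M.Hc u w s s') (Set.Icc A' (A' + δ₂)) := by
      intro w hw
      have hw0 : w ∈ Set.Ici (0:ℝ) := le_trans hA' hw.1
      exact ((hreg.deriv_H2 s s' u w hw0).continuousWithinAt).mono
        (fun y hy => le_trans hA' hy.1)
    have hderiv : ∀ w ∈ Set.Ioo A' (A' + δ₂), HasDerivAt (fun w => M.Hc u w s s')
        (M.dH2 u w s s') w := by
      intro w hw
      have hw0 : (0:ℝ) < w := lt_of_le_of_lt hA' hw.1
      exact (hreg.deriv_H2 s s' u w (le_of_lt hw0)).hasDerivAt (Ici_mem_nhds hw0)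
    obtain ⟨c, hc, hceq⟩ := exists_hasDerivAt_eq_slope (fun w => M.Hc u w s s')
      (fun w => M.dH2 u w s s') hlt hcont hderiv
    have hslope : φ u = M.dH2 u c s s' := by
      rw [hφ]; simp only []
      rw [hceq]; congr 1; ring
    rw [hslope]
    exact hec s s' u hu c (le_trans hA' (le_of_lt hc.1)) A' hA'
      (by rw [abs_le]; constructor <;> linarith [hc.1, hc.2])
  have hφc : ContinuousWithinAt φ (Set.Icc (0:ℝ) M.B) v := by
    have h1 : ContinuousWithinAt (fun u => M.Hc u (A' + δ₂) s s') (Set.Ici (0:ℝ)) v :=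
      (hreg.deriv_H1 s s' (A' + δ₂) v hv.1).continuousWithinAt
    have h2 : ContinuousWithinAt (fun u => M.Hc u A' s s') (Set.Ici (0:ℝ)) v :=
      (hreg.deriv_H1 s s' A' v hv.1).continuousWithinAt
    exact (((h1.sub h2).div_const δ₂).mono (fun y hy => hy.1))
  rw [Metric.continuousWithinAt_iff] at hφc
  obtain ⟨δ', hδ', hφcc⟩ := hφc (ε/3) (by linarith)
  refine ⟨δ'/2, by linarith, ?_⟩
  intro u hu hd
  have hdist : dist u v < δ' := by
    rw [Real.dist_eq]; linarith [hd]
  have h3 : |φ u - φ v| ≤ ε/3 := by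
    have := hφcc hu hdist
    rw [Real.dist_eq] at this; linarith
  have h1 := happrox u hu
  have h2 := happrox v hv
  calc |M.dH2 u A' s s' - M.dH2 v A' s s'|
      = |(M.dH2 u A' s s' - φ u) + (φ u - φ v) + (φ v - M.dH2 v A' s s')| := by ring_nf
    _ ≤ ε := by
        have := abs_add_le ((M.dH2 u A' s s' - φ u) + (φ u - φ v)) (φ v - M.dH2 v A' s s')
        have := abs_add_le (M.dH2 u A' s s' - φ u) (φ u - φ v)
        have hs1 : |M.dH2 u A' s s' - φ u| ≤ ε/3 := by rw [abs_sub_comm]; exact h1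
        have hs2 : |φ v - M.dH2 v A' s s'| ≤ ε/3 := h2
        linarith [abs_add_le ((M.dH2 u A' s s' - φ u) + (φ u - φ v)) (φ v - M.dH2 v A' s s'),
          abs_add_le (M.dH2 u A' s s' - φ u) (φ u - φ v)]

set_option linter.unusedSectionVars false in
/-- Continuity of `dH1` in its *second* argument, at a fixed point. -/
lemma crossH1 {M : ElecModel S X0} {P Q : ℝ} (hreg : M.RegularAssumptions P Q)
    (s s' : S) {A : ℝ} (hA : 0 ≤ A) {v : ℝ} (hv : v ∈ Set.Icc (0:ℝ) M.B)
    {ε : ℝ} (hε : 0 < ε) :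
    ∃ δ > 0, ∀ u ∈ Set.Icc (0:ℝ) M.B, |u - v| ≤ δ →
      |M.dH1 A u s s' - M.dH1 A v s s'| ≤ ε := by
  obtain ⟨δ₂, hδ₂, hec⟩ := hreg.equicont_H1 (ε/3) (by linarith)
  set φ : ℝ → ℝ := fun u => (M.Hc (A + δ₂) u s s' - M.Hc A u s s') / δ₂ with hφ
  have happrox : ∀ u ∈ Set.Icc (0:ℝ) M.B, |φ u - M.dH1 A u s s'| ≤ ε/3 := by
    intro u hu
    have hlt : A < A + δ₂ := by linarith
    have hcont : ContinuousOn (fun w => M.Hc w u s s') (Set.Icc A (A + δ₂)) := by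
      intro w hw
      have hw0 : w ∈ Set.Ici (0:ℝ) := le_trans hA hw.1
      exact ((hreg.deriv_H1 s s' u w hw0).continuousWithinAt).mono
        (fun y hy => le_trans hA hy.1)
    have hderiv : ∀ w ∈ Set.Ioo A (A + δ₂), HasDerivAt (fun w => M.Hc w u s s')
        (M.dH1 w u s s') w := by
      intro w hw
      have hw0 : (0:ℝ) < w := lt_of_le_of_lt hA hw.1
      exact (hreg.deriv_H1 s s' u w (le_of_lt hw0)).hasDerivAt (Ici_mem_nhds hw0)
    obtain ⟨c, hc, hceq⟩ := exists_hasDerivAt_eq_slope (fun w => M.Hc w u s s')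
      (fun w => M.dH1 w u s s') hlt hcont hderiv
    have hslope : φ u = M.dH1 c u s s' := by
      rw [hφ]; simp only []
      rw [hceq]; congr 1; ring
    rw [hslope]
    exact hec s s' u hu c (le_trans hA (le_of_lt hc.1)) A hA
      (by rw [abs_le]; constructor <;> linarith [hc.1, hc.2])
  have hφc : ContinuousWithinAt φ (Set.Icc (0:ℝ) M.B) v := by
    have h1 : ContinuousWithinAt (fun u => M.Hc (A + δ₂) u s s') (Set.Ici (0:ℝ)) v :=
      (hreg.deriv_H2 s s' (A + δ₂) v hv.1).continuousWithinAt
    have h2 : ContinuousWithinAt (fun u => M.Hc A u s s') (Set.Ici (0:ℝ)) v :=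
      (hreg.deriv_H2 s s' A v hv.1).continuousWithinAt
    exact (((h1.sub h2).div_const δ₂).mono (fun y hy => hy.1))
  rw [Metric.continuousWithinAt_iff] at hφc
  obtain ⟨δ', hδ', hφcc⟩ := hφc (ε/3) (by linarith)
  refine ⟨δ'/2, by linarith, ?_⟩
  intro u hu hd
  have hdist : dist u v < δ' := by
    rw [Real.dist_eq]; linarith [hd]
  have h3 : |φ u - φ v| ≤ ε/3 := by
    have := hφcc hu hdist
    rw [Real.dist_eq] at this; linarith
  have h1 := happrox u hu
  have h2 := happrox v hv
  calc |M.dH1 A u s s' - M.dH1 A v s s'|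
      = |(M.dH1 A u s s' - φ u) + (φ u - φ v) + (φ v - M.dH1 A v s s')| := by ring_nf
    _ ≤ ε := by
        have hs1 : |M.dH1 A u s s' - φ u| ≤ ε/3 := by rw [abs_sub_comm]; exact h1
        have hs2 : |φ v - M.dH1 A v s s'| ≤ ε/3 := h2
        linarith [abs_add_le ((M.dH1 A u s s' - φ u) + (φ u - φ v)) (φ v - M.dH1 A v s s'),
          abs_add_le (M.dH1 A u s s' - φ u) (φ u - φ v)]
/-- Per-capita demand in the `(m+1)`-consumer game when everyone is oblivious. -/
def pcap (M : ElecModel S X0) (ν : OblStrategy M) (x0 : X0) (m : ℕ) (ω : Fin m → X0)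
    (h : ℕ → S) (t : ℕ) : ℝ :=
  (ν.act t x0 h + ∑ j, ν.act t (ω j) h) / ((m : ℝ) + 1)

set_option linter.unusedSectionVars false in
lemma pcap_mem (M : ElecModel S X0) (ν : OblStrategy M) (x0 : X0) (m : ℕ) (ω : Fin m → X0)
    (h : ℕ → S) (t : ℕ) : pcap M ν x0 m ω h t ∈ Set.Icc (0:ℝ) M.B := by
  have hm : (0:ℝ) < (m:ℝ) + 1 := by positivity
  have h0 : ∀ x, ν.act t x h ∈ Set.Icc (0:ℝ) M.B := fun x => ν.act_mem t x h
  simp only [pcap]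
  constructor
  · apply div_nonneg _ (le_of_lt hm)
    have : (0:ℝ) ≤ ∑ j, ν.act t (ω j) h :=
      Finset.sum_nonneg fun j _ => (h0 (ω j)).1
    linarith [(h0 x0).1]
  · rw [div_le_iff₀ hm]
    have hsum : ∑ j, ν.act t (ω j) h ≤ (m:ℝ) * M.B := by
      calc ∑ j, ν.act t (ω j) h ≤ ∑ _j : Fin m, M.B :=
            Finset.sum_le_sum fun j _ => (h0 (ω j)).2
      _ = (m:ℝ) * M.B := by simp [mul_comm]
    have := (h0 x0).2
    nlinarith
set_option linter.unusedSectionVars false in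
lemma avg_mem (M : ElecModel S X0) (ν : OblStrategy M) (s0 : S) (h : ℕ → S) (t : ℕ) :
    M.avgDemand ν s0 h t ∈ Set.Icc (0:ℝ) M.B := by
  constructor
  · exact Finset.sum_nonneg fun x _ =>
      mul_nonneg (M.eta_nonneg s0 x) (ν.act_mem t x h).1
  · calc M.avgDemand ν s0 h t ≤ ∑ x, M.eta s0 x * M.B :=
        Finset.sum_le_sum fun x _ =>
          mul_le_mul_of_nonneg_left (ν.act_mem t x h).2 (M.eta_nonneg s0 x)
    _ = M.B := by rw [← Finset.sum_mul, M.eta_sum s0, one_mul]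

set_option linter.unusedSectionVars false in
lemma iTraj_toHist (M : ElecModel S X0) (m : ℕ) (ν : OblStrategy M) (x0 : X0)
    (ω : Fin m → X0) (h : ℕ → S) : ∀ t,
    M.iTraj m ν.toHist ν x0 ω h t = (ν.act t x0 h, M.zTraj x0 h (fun τ => ν.act τ x0 h) t) := by
  intro t
  induction t with
  | zero => rfl
  | succ t ih =>
    rw [ElecModel.iTraj.eq_def]
    simp only []
    rw [ih]
    rfl

set_option linter.unusedSectionVars false in
lemma aggDemandN_toHist (M : ElecModel S X0) (m : ℕ) (ν : OblStrategy M) (x0 : X0)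
    (ω : Fin m → X0) (h : ℕ → S) (t : ℕ) :
    M.aggDemandN m ν.toHist ν x0 ω h t / ((m : ℝ) + 1) = pcap M ν x0 m ω h t := by
  rw [ElecModel.aggDemandN, iTraj_toHist, pcap]

/-- Aggregate price error at stage `t` along history `h`. -/
def errT (M : ElecModel S X0) (ν : OblStrategy M) (s0 : S) (x0 : X0) (m : ℕ)
    (ω : Fin m → X0) (h : ℕ → S) : ℕ → ℝ
  | 0 => |M.dC (pcap M ν x0 m ω h 0) (h 0) - M.dC (M.avgDemand ν s0 h 0) (h 0)|
       + |M.dH0 (pcap M ν x0 m ω h 0) (h 0) - M.dH0 (M.avgDemand ν s0 h 0) (h 0)|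
  | (u+1) =>
       |M.dC (pcap M ν x0 m ω h (u+1)) (h (u+1))
          - M.dC (M.avgDemand ν s0 h (u+1)) (h (u+1))|
       + |M.dH2 (pcap M ν x0 m ω h u) (pcap M ν x0 m ω h (u+1)) (h u) (h (u+1))
          - M.dH2 (M.avgDemand ν s0 h u) (M.avgDemand ν s0 h (u+1)) (h u) (h (u+1))|
       + |M.dH1 (pcap M ν x0 m ω h u) (pcap M ν x0 m ω h (u+1)) (h u) (h (u+1))
          - M.dH1 (M.avgDemand ν s0 h u) (M.avgDemand ν s0 h (u+1)) (h u) (h (u+1))|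

set_option linter.unusedSectionVars false in
lemma errT_nonneg (M : ElecModel S X0) (ν : OblStrategy M) (s0 : S) (x0 : X0) (m : ℕ)
    (ω : Fin m → X0) (h : ℕ → S) (t : ℕ) : 0 ≤ errT M ν s0 x0 m ω h t := by
  cases t with
  | zero => exact add_nonneg (abs_nonneg _) (abs_nonneg _)
  | succ u => exact add_nonneg (add_nonneg (abs_nonneg _) (abs_nonneg _)) (abs_nonneg _)

set_option linter.unusedSectionVars false in
/-- Per-history payoff difference bound. -/
lemma stage_bound (M : ElecModel S X0) (ν : OblStrategy M) (s0 : S) (x0 : X0)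
    (m : ℕ) (ω : Fin m → X0) (h : ℕ → S) :
    |M.oblStageSum ν ν s0 x0 h - M.iPayoff m ν.toHist ν x0 ω h|
      ≤ M.B * ∑ t ∈ Finset.range (M.T + 1), errT M ν s0 x0 m ω h t := by
  rw [ElecModel.oblStageSum, ElecModel.iPayoff, ← Finset.sum_sub_distrib, Finset.mul_sum]
  refine le_trans (Finset.abs_sum_le_sum_abs _ _) (Finset.sum_le_sum ?_)
  intro t _
  have hB := M.B_pos
  have ha : ∀ τ, ν.act τ x0 h ∈ Set.Icc (0:ℝ) M.B := fun τ => ν.act_mem τ x0 h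
  cases t with
  | zero =>
    simp only [ElecModel.pN, ElecModel.wN, ElecModel.qN, ElecModel.pTil, ElecModel.wTil,
      ElecModel.qTil, iTraj_toHist, aggDemandN_toHist, errT, eq_self_iff_true, if_true]
    set a := ν.act 0 x0 h
    set X := M.dC (pcap M ν x0 m ω h 0) (h 0) - M.dC (M.avgDemand ν s0 h 0) (h 0) with hX
    set Y := M.dH0 (pcap M ν x0 m ω h 0) (h 0) - M.dH0 (M.avgDemand ν s0 h 0) (h 0) with hY
    have hrw : M.U 0 x0 (M.zTraj x0 h (fun τ => ν.act τ x0 h) 0) (h 0) a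
        - (M.dC (M.avgDemand ν s0 h 0) (h 0) + M.dH0 (M.avgDemand ν s0 h 0) (h 0)) * a - 0 * 0
        - (M.U 0 x0 (M.zTraj x0 h (fun τ => ν.act τ x0 h) 0) (h 0) a
          - (M.dC (pcap M ν x0 m ω h 0) (h 0) + M.dH0 (pcap M ν x0 m ω h 0) (h 0)) * a - 0 * 0)
        = (X + Y) * a := by rw [hX, hY]; ring
    rw [hrw]
    calc |(X + Y) * a| = |X + Y| * |a| := abs_mul _ _
      _ ≤ (|X| + |Y|) * M.B := by
          apply mul_le_mul (abs_add_le _ _) _ (abs_nonneg _)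
            (add_nonneg (abs_nonneg _) (abs_nonneg _))
          rw [abs_of_nonneg (ha 0).1]; exact (ha 0).2
      _ = M.B * (|X| + |Y|) := mul_comm _ _
  | succ u =>
    simp only [ElecModel.pN, ElecModel.wN, ElecModel.qN, ElecModel.pTil, ElecModel.wTil,
      ElecModel.qTil, iTraj_toHist, aggDemandN_toHist, errT]
    set a := ν.act (u+1) x0 h
    set c := ν.act u x0 h
    set X := M.dC (pcap M ν x0 m ω h (u+1)) (h (u+1))
      - M.dC (M.avgDemand ν s0 h (u+1)) (h (u+1)) with hX
    set Y := M.dH2 (pcap M ν x0 m ω h u) (pcap M ν x0 m ω h (u+1)) (h u) (h (u+1))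
      - M.dH2 (M.avgDemand ν s0 h u) (M.avgDemand ν s0 h (u+1)) (h u) (h (u+1)) with hY
    set Z := M.dH1 (pcap M ν x0 m ω h u) (pcap M ν x0 m ω h (u+1)) (h u) (h (u+1))
      - M.dH1 (M.avgDemand ν s0 h u) (M.avgDemand ν s0 h (u+1)) (h u) (h (u+1)) with hZ
    have hif : (if u + 1 = 0 then (0:ℝ) else ν.act (u + 1 - 1) x0 h) = c := by simp; rfl
    rw [hif]
    have hrw : M.U (u+1) x0 (M.zTraj x0 h (fun τ => ν.act τ x0 h) (u+1)) (h (u+1)) a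
        - (M.dC (M.avgDemand ν s0 h (u+1)) (h (u+1))
            + M.dH2 (M.avgDemand ν s0 h u) (M.avgDemand ν s0 h (u+1)) (h u) (h (u+1))) * a
        - M.dH1 (M.avgDemand ν s0 h u) (M.avgDemand ν s0 h (u+1)) (h u) (h (u+1)) * c
        - (M.U (u+1) x0 (M.zTraj x0 h (fun τ => ν.act τ x0 h) (u+1)) (h (u+1)) a
          - (M.dC (pcap M ν x0 m ω h (u+1)) (h (u+1))
              + M.dH2 (pcap M ν x0 m ω h u) (pcap M ν x0 m ω h (u+1)) (h u) (h (u+1))) * a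
          - M.dH1 (pcap M ν x0 m ω h u) (pcap M ν x0 m ω h (u+1)) (h u) (h (u+1)) * c)
        = (X + Y) * a + Z * c := by rw [hX, hY, hZ]; ring
    rw [hrw]
    calc |(X + Y) * a + Z * c| ≤ |(X + Y) * a| + |Z * c| := abs_add_le _ _
      _ = |X + Y| * |a| + |Z| * |c| := by rw [abs_mul, abs_mul]
      _ ≤ (|X| + |Y|) * M.B + |Z| * M.B := by
          apply add_le_add
          · apply mul_le_mul (abs_add_le _ _) _ (abs_nonneg _)
              (add_nonneg (abs_nonneg _) (abs_nonneg _))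
            rw [abs_of_nonneg (ha (u+1)).1]; exact (ha (u+1)).2
          · apply mul_le_mul_of_nonneg_left _ (abs_nonneg _)
            rw [abs_of_nonneg (ha u).1]; exact (ha u).2
      _ = M.B * (|X| + |Y| + |Z|) := by ring
set_option linter.unusedSectionVars false in
set_option maxHeartbeats 1000000 in
/-- Main analytic lemma: the expected price error at a fixed history and stage
vanishes as the number of consumers grows. -/
lemma err_tendsto {M : ElecModel S X0} {P Q : ℝ} (hreg : M.RegularAssumptions P Q)
    (ν : OblStrategy M) (s0 : S) (x0 : X0) (h : ℕ → S) (t : ℕ) :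
    Filter.Tendsto
      (fun m : ℕ => ∑ ω : Fin m → X0, (∏ l, M.eta s0 (ω l)) * errT M ν s0 x0 m ω h t)
      Filter.atTop (nhds 0) := by
  have hP : 0 ≤ P := le_trans (abs_nonneg _) (hreg.bound_C (h 0) 0 Set.self_mem_Ici)
  have hB := M.B_pos
  rw [Metric.tendsto_atTop]
  intro ε hε
  -- Claim A: uniform pointwise quadratic bound
  obtain ⟨c, hc0, hclaim⟩ : ∃ c, 0 ≤ c ∧ ∀ (m : ℕ) (ω : Fin m → X0),
      errT M ν s0 x0 m ω h t ≤ ε/2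
        + c * ((pcap M ν x0 m ω h t - M.avgDemand ν s0 h t)^2
             + (pcap M ν x0 m ω h (t-1) - M.avgDemand ν s0 h (t-1))^2) := by
    cases t with
    | zero =>
      obtain ⟨δ1, hδ1, hec1⟩ := hreg.equicont_C (ε/4) (by positivity)
      obtain ⟨δ2, hδ2, hec2⟩ := hreg.equicont_H0 (ε/4) (by positivity)
      refine ⟨2*P/δ1^2 + 2*P/δ2^2, by positivity, ?_⟩
      intro m ω
      have hpc := pcap_mem M ν x0 m ω h 0
      have hav := avg_mem M ν s0 h 0
      have hpcI : pcap M ν x0 m ω h 0 ∈ Set.Ici (0:ℝ) := hpc.1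
      have havI : M.avgDemand ν s0 h 0 ∈ Set.Ici (0:ℝ) := hav.1
      have h1 := quant_bound (f := fun A => M.dC A (h 0)) (D := Set.Ici 0) hP hδ1
        (by positivity) (fun u hu => hreg.bound_C (h 0) u hu) havI
        (fun u hu hd => hec1 (h 0) u hu _ havI hd) _ hpcI
      have h2 := quant_bound (f := fun A => M.dH0 A (h 0)) (D := Set.Ici 0) hP hδ2
        (by positivity) (fun u hu => hreg.bound_H0 (h 0) u hu) havI
        (fun u hu hd => hec2 (h 0) u hu _ havI hd) _ hpcI
      have hΔ : (0:ℝ) ≤ (pcap M ν x0 m ω h 0 - M.avgDemand ν s0 h 0)^2 := sq_nonneg _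
      have e1 : (0:ℝ) ≤ 2*P/δ1^2 := by positivity
      have e2 : (0:ℝ) ≤ 2*P/δ2^2 := by positivity
      simp only [errT, Nat.zero_sub]
      linarith [mul_nonneg e1 hΔ, mul_nonneg e2 hΔ, h1, h2]
    | succ u =>
      obtain ⟨δ1, hδ1, hec1⟩ := hreg.equicont_C (ε/12) (by positivity)
      obtain ⟨δ2, hδ2, hec2⟩ := hreg.equicont_H2 (ε/12) (by positivity)
      obtain ⟨δ3, hδ3, hec3⟩ := hreg.equicont_H1 (ε/12) (by positivity)
      have hav1 := avg_mem M ν s0 h u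
      have hav2 := avg_mem M ν s0 h (u+1)
      obtain ⟨δ4, hδ4, hec4⟩ := crossH2 hreg (h u) (h (u+1)) hav2.1 hav1
        (ε := ε/12) (by positivity)
      obtain ⟨δ5, hδ5, hec5⟩ := crossH1 hreg (h u) (h (u+1)) hav1.1 hav2
        (ε := ε/12) (by positivity)
      refine ⟨2*P/δ1^2 + 2*P/δ2^2 + 2*P/δ3^2 + 2*P/δ4^2 + 2*P/δ5^2, by positivity, ?_⟩
      intro m ω
      have hpc1 := pcap_mem M ν x0 m ω h u
      have hpc2 := pcap_mem M ν x0 m ω h (u+1)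
      set A1 := pcap M ν x0 m ω h u with hA1
      set A2 := pcap M ν x0 m ω h (u+1) with hA2
      set B1 := M.avgDemand ν s0 h u with hB1
      set B2 := M.avgDemand ν s0 h (u+1) with hB2
      -- piece 1 : dC
      have p1 := quant_bound (f := fun A => M.dC A (h (u+1))) (D := Set.Ici 0) hP hδ1
        (by positivity) (fun w hw => hreg.bound_C (h (u+1)) w hw) hav2.1
        (fun w hw hd => hec1 (h (u+1)) w hw _ hav2.1 hd) _ hpc2.1
      -- piece 2a : dH2 in second argument
      have p2a := quant_bound (f := fun A => M.dH2 A1 A (h u) (h (u+1))) (D := Set.Ici 0)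
        hP hδ2 (by positivity)
        (fun w hw => hreg.bound_H2 (h u) (h (u+1)) A1 hpc1 w hw) hav2.1
        (fun w hw hd => hec2 (h u) (h (u+1)) A1 hpc1 w hw _ hav2.1 hd) _ hpc2.1
      -- piece 2b : dH2 in first argument (cross)
      have p2b := quant_bound (f := fun A => M.dH2 A B2 (h u) (h (u+1)))
        (D := Set.Icc 0 M.B) hP hδ4 (by positivity)
        (fun w hw => hreg.bound_H2 (h u) (h (u+1)) w hw B2 hav2.1) hav1
        (fun w hw hd => hec4 w hw hd) _ hpc1
      -- piece 3a : dH1 in first argument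
      have p3a := quant_bound (f := fun A => M.dH1 A A2 (h u) (h (u+1))) (D := Set.Ici 0)
        hP hδ3 (by positivity)
        (fun w hw => hreg.bound_H1 (h u) (h (u+1)) A2 hpc2 w hw) hav1.1
        (fun w hw hd => hec3 (h u) (h (u+1)) A2 hpc2 w hw _ hav1.1 hd) _ hpc1.1
      -- piece 3b : dH1 in second argument (cross)
      have p3b := quant_bound (f := fun A => M.dH1 B1 A (h u) (h (u+1)))
        (D := Set.Icc 0 M.B) hP hδ5 (by positivity)
        (fun w hw => hreg.bound_H1 (h u) (h (u+1)) w hw B1 hav1.1) hav2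
        (fun w hw hd => hec5 w hw hd) _ hpc2
      have tri2 : |M.dH2 A1 A2 (h u) (h (u+1)) - M.dH2 B1 B2 (h u) (h (u+1))|
          ≤ |M.dH2 A1 A2 (h u) (h (u+1)) - M.dH2 A1 B2 (h u) (h (u+1))|
            + |M.dH2 A1 B2 (h u) (h (u+1)) - M.dH2 B1 B2 (h u) (h (u+1))| :=
        abs_sub_le _ _ _
      have tri3 : |M.dH1 A1 A2 (h u) (h (u+1)) - M.dH1 B1 B2 (h u) (h (u+1))|
          ≤ |M.dH1 A1 A2 (h u) (h (u+1)) - M.dH1 B1 A2 (h u) (h (u+1))|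
            + |M.dH1 B1 A2 (h u) (h (u+1)) - M.dH1 B1 B2 (h u) (h (u+1))| :=
        abs_sub_le _ _ _
      have hΔ1 : (0:ℝ) ≤ (A1 - B1)^2 := sq_nonneg _
      have hΔ2 : (0:ℝ) ≤ (A2 - B2)^2 := sq_nonneg _
      have e1 : (0:ℝ) ≤ 2*P/δ1^2 := by positivity
      have e2 : (0:ℝ) ≤ 2*P/δ2^2 := by positivity
      have e3 : (0:ℝ) ≤ 2*P/δ3^2 := by positivity
      have e4 : (0:ℝ) ≤ 2*P/δ4^2 := by positivity
      have e5 : (0:ℝ) ≤ 2*P/δ5^2 := by positivity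
      simp only [errT, Nat.add_sub_cancel, ← hA1, ← hA2, ← hB1, ← hB2]
      linarith [p1, p2a, p2b, p3a, p3b, tri2, tri3,
        mul_nonneg e1 hΔ1, mul_nonneg e2 hΔ1, mul_nonneg e3 hΔ1,
        mul_nonneg e4 hΔ1, mul_nonneg e5 hΔ1, mul_nonneg e1 hΔ2, mul_nonneg e2 hΔ2,
        mul_nonneg e3 hΔ2, mul_nonneg e4 hΔ2, mul_nonneg e5 hΔ2]
  -- second-moment bound on the expected squared deviation
  have hEsq : ∀ (m u : ℕ), ∑ ω : Fin m → X0, (∏ l, M.eta s0 (ω l)) *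
      (pcap M ν x0 m ω h u - M.avgDemand ν s0 h u)^2 ≤ 2*M.B^2/((m:ℝ)+1) := by
    intro m u
    have := second_moment M s0 m (fun x => ν.act u x h) (ν.act u x0 h)
      (fun x => ν.act_mem u x h) (ν.act_mem u x0 h)
    simpa [pcap, ElecModel.avgDemand] using this
  have hw0 : ∀ (m : ℕ) (ω : Fin m → X0), (0:ℝ) ≤ ∏ l, M.eta s0 (ω l) :=
    fun m ω => Finset.prod_nonneg fun l _ => M.eta_nonneg s0 (ω l)
  obtain ⟨N, hN⟩ := exists_nat_gt (8 * c * M.B^2 / ε)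
  refine ⟨N, fun m hm => ?_⟩
  have hEnn : (0:ℝ) ≤ ∑ ω : Fin m → X0, (∏ l, M.eta s0 (ω l)) * errT M ν s0 x0 m ω h t :=
    Finset.sum_nonneg fun ω _ => mul_nonneg (hw0 m ω) (errT_nonneg M ν s0 x0 m ω h t)
  rw [Real.dist_eq, sub_zero, abs_of_nonneg hEnn]
  have hchain : ∑ ω : Fin m → X0, (∏ l, M.eta s0 (ω l)) * errT M ν s0 x0 m ω h t
      ≤ ε/2 + c * (2*M.B^2/((m:ℝ)+1) + 2*M.B^2/((m:ℝ)+1)) := by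
    calc ∑ ω : Fin m → X0, (∏ l, M.eta s0 (ω l)) * errT M ν s0 x0 m ω h t
        ≤ ∑ ω : Fin m → X0, (∏ l, M.eta s0 (ω l)) * (ε/2
            + c * ((pcap M ν x0 m ω h t - M.avgDemand ν s0 h t)^2
                 + (pcap M ν x0 m ω h (t-1) - M.avgDemand ν s0 h (t-1))^2)) :=
          Finset.sum_le_sum fun ω _ =>
            mul_le_mul_of_nonneg_left (hclaim m ω) (hw0 m ω)
      _ = ε/2 + c * ((∑ ω : Fin m → X0, (∏ l, M.eta s0 (ω l)) *
              (pcap M ν x0 m ω h t - M.avgDemand ν s0 h t)^2)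
            + ∑ ω : Fin m → X0, (∏ l, M.eta s0 (ω l)) *
              (pcap M ν x0 m ω h (t-1) - M.avgDemand ν s0 h (t-1))^2) := by
          have hre : ∀ ω : Fin m → X0, (∏ l, M.eta s0 (ω l)) * (ε/2
              + c * ((pcap M ν x0 m ω h t - M.avgDemand ν s0 h t)^2
                 + (pcap M ν x0 m ω h (t-1) - M.avgDemand ν s0 h (t-1))^2))
              = (∏ l, M.eta s0 (ω l)) * (ε/2)
              + (c * ((∏ l, M.eta s0 (ω l)) * (pcap M ν x0 m ω h t - M.avgDemand ν s0 h t)^2)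
                + c * ((∏ l, M.eta s0 (ω l)) *
                    (pcap M ν x0 m ω h (t-1) - M.avgDemand ν s0 h (t-1))^2)) := by
            intro ω; ring
          rw [Finset.sum_congr rfl (fun ω _ => hre ω), Finset.sum_add_distrib,
            Finset.sum_add_distrib, ← Finset.sum_mul, sum_prod_eta, one_mul,
            ← Finset.mul_sum, ← Finset.mul_sum]
          ring
      _ ≤ ε/2 + c * (2*M.B^2/((m:ℝ)+1) + 2*M.B^2/((m:ℝ)+1)) := by
          have := hEsq m t
          have := hEsq m (t-1)
          have hadd := add_le_add (hEsq m t) (hEsq m (t-1))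
          exact add_le_add le_rfl (mul_le_mul_of_nonneg_left hadd hc0)
  have hlast : c * (2*M.B^2/((m:ℝ)+1) + 2*M.B^2/((m:ℝ)+1)) < ε/2 := by
    have hm1 : (0:ℝ) < (m:ℝ)+1 := by positivity
    have hN1 : (0:ℝ) < (N:ℝ)+1 := by positivity
    have hmN : ((N:ℝ)+1) ≤ ((m:ℝ)+1) := by
      have : (N:ℝ) ≤ (m:ℝ) := Nat.cast_le.mpr hm
      linarith
    have h8 : 8 * c * M.B^2 < ((N:ℝ)+1) * ε := by
      rw [div_lt_iff₀ hε] at hN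
      nlinarith
    have hstep : c * (2*M.B^2/((m:ℝ)+1) + 2*M.B^2/((m:ℝ)+1)) = 4*c*M.B^2/((m:ℝ)+1) := by
      field_simp; ring
    rw [hstep, div_lt_iff₀ hm1]
    have h2 : 4*c*M.B^2 < ((N:ℝ)+1) * (ε/2) := by linarith
    have h3 : ((N:ℝ)+1) * (ε/2) ≤ ((m:ℝ)+1) * (ε/2) := by
      apply mul_le_mul_of_nonneg_right hmN (by linarith)
    calc 4*c*M.B^2 < ((N:ℝ)+1) * (ε/2) := h2
      _ ≤ ((m:ℝ)+1) * (ε/2) := h3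
      _ = ε/2 * ((m:ℝ)+1) := mul_comm _ _
  linarith [hchain, hlast]
set_option linter.unusedSectionVars false in
lemma histProb_nonneg (M : ElecModel S X0) (s0 : S) (h : ℕ → S) :
    0 ≤ M.histProb s0 h := by
  apply mul_nonneg
  · split <;> norm_num
  · exact Finset.prod_nonneg fun t _ => M.K_nonneg _ _

set_option linter.unusedSectionVars false in
set_option maxHeartbeats 1000000 in
/-- Master bound: the value gap is bounded by the expected price errors. -/
lemma master_bound (M : ElecModel S X0) (ν : OblStrategy M) (s0 : S) (x0 : X0) (m : ℕ) :
    |M.oblValue ν ν x0 s0 - M.Vn m ν.toHist ν x0 s0|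
      ≤ ∑ g : Fin (M.T+1) → S, M.histProb s0 (M.extendHist g) *
          (M.B * ∑ t ∈ Finset.range (M.T+1),
            ∑ ω : Fin m → X0, (∏ l, M.eta s0 (ω l)) *
              errT M ν s0 x0 m ω (M.extendHist g) t) := by
  have hw0 : ∀ ω : Fin m → X0, (0:ℝ) ≤ ∏ l, M.eta s0 (ω l) :=
    fun ω => Finset.prod_nonneg fun l _ => M.eta_nonneg s0 (ω l)
  have hp0 : ∀ g : Fin (M.T+1) → S, 0 ≤ M.histProb s0 (M.extendHist g) :=
    fun g => histProb_nonneg M s0 _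
  have h1 : M.oblValue ν ν x0 s0 - M.Vn m ν.toHist ν x0 s0
      = ∑ ω : Fin m → X0, (∏ l, M.eta s0 (ω l)) *
          ∑ g : Fin (M.T+1) → S, M.histProb s0 (M.extendHist g) *
            (M.oblStageSum ν ν s0 x0 (M.extendHist g)
              - M.iPayoff m ν.toHist ν x0 ω (M.extendHist g)) := by
    rw [ElecModel.Vn, ElecModel.oblValue, ElecModel.expectHist]
    have h2 : ∀ ω : Fin m → X0,
        (∏ l, M.eta s0 (ω l)) * ∑ g : Fin (M.T+1) → S, M.histProb s0 (M.extendHist g) *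
          (M.oblStageSum ν ν s0 x0 (M.extendHist g)
            - M.iPayoff m ν.toHist ν x0 ω (M.extendHist g))
        = (∏ l, M.eta s0 (ω l)) * (∑ g : Fin (M.T+1) → S, M.histProb s0 (M.extendHist g) *
            M.oblStageSum ν ν s0 x0 (M.extendHist g))
          - (∏ l, M.eta s0 (ω l)) * M.expectHist s0
              (fun h => M.iPayoff m ν.toHist ν x0 ω h) := by
      intro ω
      rw [ElecModel.expectHist, ← mul_sub]
      congr 1
      rw [← Finset.sum_sub_distrib]
      exact Finset.sum_congr rfl fun g _ => by ring
    rw [Finset.sum_congr rfl (fun ω _ => h2 ω), Finset.sum_sub_distrib, ← Finset.sum_mul,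
      sum_prod_eta, one_mul]
  rw [h1]
  calc |∑ ω : Fin m → X0, (∏ l, M.eta s0 (ω l)) *
          ∑ g : Fin (M.T+1) → S, M.histProb s0 (M.extendHist g) *
            (M.oblStageSum ν ν s0 x0 (M.extendHist g)
              - M.iPayoff m ν.toHist ν x0 ω (M.extendHist g))|
      ≤ ∑ ω : Fin m → X0, (∏ l, M.eta s0 (ω l)) *
          ∑ g : Fin (M.T+1) → S, M.histProb s0 (M.extendHist g) *
            (M.B * ∑ t ∈ Finset.range (M.T+1), errT M ν s0 x0 m ω (M.extendHist g) t) := by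
        refine le_trans (Finset.abs_sum_le_sum_abs _ _) (Finset.sum_le_sum ?_)
        intro ω _
        rw [abs_mul, abs_of_nonneg (hw0 ω)]
        apply mul_le_mul_of_nonneg_left _ (hw0 ω)
        refine le_trans (Finset.abs_sum_le_sum_abs _ _) (Finset.sum_le_sum ?_)
        intro g _
        rw [abs_mul, abs_of_nonneg (hp0 g)]
        exact mul_le_mul_of_nonneg_left
          (stage_bound M ν s0 x0 m ω (M.extendHist g)) (hp0 g)
    _ = ∑ g : Fin (M.T+1) → S, M.histProb s0 (M.extendHist g) *
          (M.B * ∑ t ∈ Finset.range (M.T+1),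
            ∑ ω : Fin m → X0, (∏ l, M.eta s0 (ω l)) *
              errT M ν s0 x0 m ω (M.extendHist g) t) := by
        simp only [Finset.mul_sum]
        rw [Finset.sum_comm]
        refine Finset.sum_congr rfl fun g _ => ?_
        rw [Finset.sum_comm]
        refine Finset.sum_congr rfl fun t _ => ?_
        refine Finset.sum_congr rfl fun ω _ => ?_
        ring
end ElecAux

open ElecModel in
/-- Step 4 of the proof of Theorem 1. A consumer's optimal oblivious
value is asymptotically achieved in the `n`-consumer game under a DOE strategy: if all
consumers (including `i`) use a DOE strategy `ν` of the continuum game, then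
`lim_{n→∞} (Ṽ(x0, s0 ∣ ν, ν) - Vⁿ(x0, s0 ∣ ν, ν)) = 0`. -/
theorem oblivious_value_asymptotically_achieved
    {S : Type*} {X0 : Type*} [Fintype S] [DecidableEq S] [Fintype X0] [DecidableEq X0]
    (M : ElecModel S X0) (P Q : ℝ)
    (hreg : RegularAssumptions M P Q)
    (ν : OblStrategy M) (hDOE : M.IsDOE ν) :
    ∀ (s0 : S) (x0 : X0),
      Filter.Tendsto
        (fun n : ℕ => M.oblValue ν ν x0 s0 - M.Vn (n - 1) ν.toHist ν x0 s0)
        Filter.atTop (nhds 0) := by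
  intro s0 x0
  set bound : ℕ → ℝ := fun m =>
    ∑ g : Fin (M.T+1) → S, M.histProb s0 (M.extendHist g) *
      (M.B * ∑ t ∈ Finset.range (M.T+1),
        ∑ ω : Fin m → X0, (∏ l, M.eta s0 (ω l)) *
          ElecAux.errT M ν s0 x0 m ω (M.extendHist g) t) with hbnd
  have hb : ∀ m : ℕ, |M.oblValue ν ν x0 s0 - M.Vn m ν.toHist ν x0 s0| ≤ bound m :=
    fun m => ElecAux.master_bound M ν s0 x0 m
  have htend : Filter.Tendsto bound Filter.atTop (nhds 0) := by
    have hg : ∀ g : Fin (M.T+1) → S,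
        Filter.Tendsto (fun m : ℕ => M.histProb s0 (M.extendHist g) *
          (M.B * ∑ t ∈ Finset.range (M.T+1),
            ∑ ω : Fin m → X0, (∏ l, M.eta s0 (ω l)) *
              ElecAux.errT M ν s0 x0 m ω (M.extendHist g) t)) Filter.atTop (nhds 0) := by
      intro g
      have hsum := tendsto_finset_sum (Finset.range (M.T+1))
        (fun t _ => ElecAux.err_tendsto hreg ν s0 x0 (M.extendHist g) t)
      have := ((hsum.const_mul M.B).const_mul (M.histProb s0 (M.extendHist g)))
      simpa using this
    have := tendsto_finset_sum (Finset.univ : Finset (Fin (M.T+1) → S)) (fun g _ => hg g)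
    simpa [hbnd] using this
  apply squeeze_zero_norm (fun n => ?_) (htend.comp (Filter.tendsto_sub_atTop_nat 1))
  exact hb (n - 1)
end
end

section
/- If the initial population state of an n-consumer game is close to its expectation, the social welfare achieved by any dynamic oblivious strategy is close (per consumer) to its continuum counterpart: for any initial exogenous state s₀ and any ε > 0, there exists δ > 0 such that for every n, every initial population state fⁿ₀ with max_{x∈𝒳₀} |fⁿ₀(x) − η_{s₀}(x)| ≤ δ, and every dynamic oblivious strategy ϑ, one has | 𝒲ⁿ₀(fⁿ₀, s₀ | ϑ⃗ⁿ) − n W̃₀(s₀ | ϑ) | ≤ ε n, where ϑ⃗ⁿ = (ϑ,…,ϑ) is the symmetric profile in which all n consumers use ϑ. -/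
/-!
Dynamic pricing model of Tsitsiklis and Xu, "Pricing of Fluctuations in
Electricity Markets".

* `S` : finite exogenous state space, evolving as a Markov chain with kernel `K`;
* `X0` : finite set of consumer types, with type distribution `eta s0` given the
  initial exogenous state `s0`;
* actions lie in `[0, B]`, internal states in `[0, Zbd]`, updated by `r`;
* `U t x z s a` : stage utility; `Cc`, `Hc0`, `Hc` : continuum primary and
  ancillary cost functions, with (partial) derivatives `dC`, `dH0`, `dH1`
  (w.r.t. the first demand argument) and `dH2` (w.r.t. the second).
In the `n`-consumer model the costs scale as `Cⁿ(A,s) = n * Cc (A/n) s` etc., so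
the `n`-consumer prices are the continuum marginal costs evaluated at the
per-capita demand `A / n`.
-/

noncomputable section

set_option linter.unusedSectionVars false
section Aux

-- generic Lipschitz from bounded derivative on Ici 0
lemma lip_aux {f f' : ℝ → ℝ} {P : ℝ}
    (hd : ∀ A ∈ Set.Ici (0:ℝ), HasDerivWithinAt f (f' A) (Set.Ici 0) A)
    (hb : ∀ A ∈ Set.Ici (0:ℝ), |f' A| ≤ P) :
    ∀ a ∈ Set.Ici (0:ℝ), ∀ b ∈ Set.Ici (0:ℝ), |f a - f b| ≤ P * |a - b| := by
  intro a ha b hb'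
  have := (convex_Ici (0:ℝ)).norm_image_sub_le_of_norm_hasDerivWithin_le hd
    (C := P) (fun x hx => by simpa using hb x hx) hb' ha
  simpa [Real.norm_eq_abs] using this

lemma tri3 {n a b c a' b' c' du dc dh : ℝ}
    (h1 : |a - n * a'| ≤ du) (h2 : |b - n * b'| ≤ dc) (h3 : |c - n * c'| ≤ dh) :
    |a - b - c - n * (a' - b' - c')| ≤ du + dc + dh := by
  have e : a - b - c - n * (a' - b' - c')
      = (a - n * a') - (b - n * b') - (c - n * c') := by ring
  rw [e]
  calc |(a - n * a') - (b - n * b') - (c - n * c')|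
      ≤ |(a - n * a') - (b - n * b')| + |c - n * c'| := abs_sub _ _
    _ ≤ |a - n * a'| + |b - n * b'| + |c - n * c'| :=
        add_le_add (abs_sub _ _) le_rfl
    _ ≤ du + dc + dh := by linarith

lemma markov_sum {S : Type*} [Fintype S] [DecidableEq S] (K : S → S → ℝ)
    (hK : ∀ s, ∑ s', K s s' = 1) :
    ∀ (T : ℕ) (s0 : S),
      ∑ g : Fin (T+1) → S, (if g 0 = s0 then (1:ℝ) else 0) *
        ∏ t : Fin T, K (g t.castSucc) (g t.succ) = 1 := by
  intro T
  induction T with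
  | zero =>
    intro s0
    rw [← Equiv.sum_comp (Equiv.funUnique (Fin 1) S).symm]
    simp
  | succ T ih =>
    intro s0
    rw [← Equiv.sum_comp (Fin.snocEquiv (fun _ : Fin (T+2) => S)), Fintype.sum_prod_type,
      Finset.sum_comm]
    have : ∀ g' : Fin (T+1) → S, ∀ sl : S,
        (if (Fin.snocEquiv (fun _ : Fin (T+2) => S)) (sl, g') 0 = s0 then (1:ℝ) else 0) *
          ∏ t : Fin (T+1), K ((Fin.snocEquiv (fun _ : Fin (T+2) => S)) (sl, g') t.castSucc)
            ((Fin.snocEquiv (fun _ : Fin (T+2) => S)) (sl, g') t.succ)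
        = ((if g' 0 = s0 then (1:ℝ) else 0) *
            ∏ t : Fin T, K (g' t.castSucc) (g' t.succ)) * K (g' (Fin.last T)) sl := by
      intro g' sl
      have hsnoc : ∀ i : Fin (T+1),
          (Fin.snocEquiv (fun _ : Fin (T+2) => S)) (sl, g') i.castSucc = g' i := by
        intro i; simp [Fin.snocEquiv]
      have hlast : (Fin.snocEquiv (fun _ : Fin (T+2) => S)) (sl, g') (Fin.last (T+1)) = sl := by
        simp [Fin.snocEquiv]
      rw [Fin.prod_univ_castSucc]
      have h0 : (Fin.snocEquiv (fun _ : Fin (T+2) => S)) (sl, g') 0 = g' 0 := by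
        have := hsnoc 0; rwa [Fin.castSucc_zero] at this
      rw [h0]
      have hterm : ∀ t : Fin T,
          K ((Fin.snocEquiv (fun _ : Fin (T+2) => S)) (sl, g') t.castSucc.castSucc)
            ((Fin.snocEquiv (fun _ : Fin (T+2) => S)) (sl, g') t.castSucc.succ)
          = K (g' t.castSucc) (g' t.succ) := by
        intro t
        rw [hsnoc t.castSucc, Fin.succ_castSucc, hsnoc t.succ]
      rw [Finset.prod_congr rfl (fun t _ => hterm t), hsnoc (Fin.last T), Fin.succ_last, hlast]
      ring
    calc ∑ g' : Fin (T+1) → S, ∑ sl : S,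
          (if (Fin.snocEquiv (fun _ : Fin (T+2) => S)) (sl, g') 0 = s0 then (1:ℝ) else 0) *
            ∏ t : Fin (T+1), K ((Fin.snocEquiv (fun _ : Fin (T+2) => S)) (sl, g') t.castSucc)
              ((Fin.snocEquiv (fun _ : Fin (T+2) => S)) (sl, g') t.succ)
        = ∑ g' : Fin (T+1) → S, ((if g' 0 = s0 then (1:ℝ) else 0) *
            ∏ t : Fin T, K (g' t.castSucc) (g' t.succ)) := by
          refine Finset.sum_congr rfl fun g' _ => ?_
          rw [Finset.sum_congr rfl (fun sl _ => this g' sl), ← Finset.mul_sum, hK, mul_one]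
      _ = 1 := ih s0


namespace ElecModel

variable {S : Type*} {X0 : Type*} [Fintype S] [DecidableEq S] [Fintype X0] [DecidableEq X0]

lemma histProb_nonneg (M : ElecModel S X0) (s0 : S) (h : ℕ → S) :
    0 ≤ M.histProb s0 h := by
  unfold histProb
  apply mul_nonneg
  · split <;> norm_num
  · exact Finset.prod_nonneg fun t _ => M.K_nonneg _ _

lemma sum_histProb (M : ElecModel S X0) (s0 : S) :
    ∑ g : Fin (M.T+1) → S, M.histProb s0 (M.extendHist g) = 1 := by
  rw [← markov_sum M.K M.K_sum M.T s0]
  refine Finset.sum_congr rfl fun g _ => ?_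
  unfold histProb
  congr 1
  · rw [← Fin.prod_univ_eq_prod_range]
    refine Finset.prod_congr rfl fun t _ => ?_
    have h1 : M.extendHist g t.val = g t.castSucc := by
      unfold extendHist; congr 1; exact Fin.ext (by simp [Nat.min_eq_left (le_of_lt (Nat.lt_succ_of_lt t.isLt))])
    have h2 : M.extendHist g (t.val + 1) = g t.succ := by
      unfold extendHist; congr 1; exact Fin.ext (by simp [Nat.min_eq_left (Nat.succ_le_of_lt t.isLt)])
    rw [h1, h2]

lemma sum_fiber {n : ℕ} (ω : Fin n → X0) (F : X0 → ℝ) :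
    ∑ i : Fin n, F (ω i)
      = ∑ x : X0, ((Finset.univ.filter fun i => ω i = x).card : ℝ) * F x := by
  rw [← Finset.sum_fiberwise Finset.univ ω (fun i => F (ω i))]
  refine Finset.sum_congr rfl fun x _ => ?_
  have hcongr : ∀ i ∈ Finset.univ.filter fun i => ω i = x, F (ω i) = F x := by
    intro i hi; rw [(Finset.mem_filter.mp hi).2]
  rw [Finset.sum_congr rfl hcongr, Finset.sum_const, nsmul_eq_mul]

lemma popState_sum {n : ℕ} (hn : 0 < n) (ω : Fin n → X0) :
    ∑ x : X0, popState n ω x = 1 := by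
  unfold popState
  rw [← Finset.sum_div]
  rw [show ∑ x : X0, ((Finset.univ.filter fun i => ω i = x).card : ℝ)
      = ((n : ℕ) : ℝ) from ?_]
  · field_simp
  · rw [← Nat.cast_sum]
    norm_cast
    rw [← Finset.card_eq_sum_card_fiberwise (fun i _ => Finset.mem_univ (ω i))]
    simp

lemma popState_nonneg {n : ℕ} (ω : Fin n → X0) (x : X0) : 0 ≤ popState n ω x := by
  unfold popState; positivity

lemma popState_mul (M : ElecModel S X0) {n : ℕ} (hn : 0 < n) (ω : Fin n → X0) (x : X0) :
    ((Finset.univ.filter fun i => ω i = x).card : ℝ) = (n : ℝ) * popState n ω x := by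
  unfold popState
  field_simp

lemma joint_eq (M : ElecModel S X0) (n : ℕ) (ϑ : OblStrategy M) (ω : Fin n → X0)
    (h : ℕ → S) : ∀ (t : ℕ) (i : Fin n),
    M.jointTraj n ϑ.toHist ω h t i
      = (ϑ.act t (ω i) h, M.zTraj (ω i) h (fun τ => ϑ.act τ (ω i) h) t) := by
  intro t
  induction t with
  | zero => intro i; simp [jointTraj, zTraj, OblStrategy.toHist]
  | succ t ih =>
    intro i
    simp only [jointTraj, ih]
    simp [OblStrategy.toHist, zTraj]

end ElecModel
end Aux

open ElecModel in
/-- Step 1, Eq. (EC.22), of the proof of Theorem 2(b). If the initial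
population state of an `n`-consumer game is close to its expectation `η_{s₀}`, the social
welfare achieved by any dynamic oblivious strategy is close, per consumer, to its
continuum counterpart: for every `ε > 0` there is `δ > 0` such that for every `n`, every
initial population state (empirical type distribution of a type profile `ω`) within `δ`
of `η_{s₀}` in the sup metric, and every dynamic oblivious strategy `ϑ`,
`|𝒲ⁿ₀(fⁿ₀, s₀ ∣ ϑ) - n · W̃₀(s₀ ∣ ϑ)| ≤ ε n`. -/
theorem welfare_close_to_continuum_welfare
    {S : Type*} {X0 : Type*} [Fintype S] [DecidableEq S] [Fintype X0] [DecidableEq X0]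
    (M : ElecModel S X0) (P Q : ℝ)
    (hreg : RegularAssumptions M P Q) :
    ∀ (s0 : S), ∀ ε > (0 : ℝ), ∃ δ > (0 : ℝ), ∀ (n : ℕ), 0 < n → ∀ ω : Fin n → X0,
      (∀ x : X0, |popState n ω x - M.eta s0 x| ≤ δ) →
      ∀ ϑ : OblStrategy M,
        |M.expectHist s0 (fun h => M.welfProfile n ϑ.toHist ω h)
            - (n : ℝ) * M.contWelfare ϑ s0| ≤ ε * n := by
  intro s0 ε hε
  have hX0 : Nonempty X0 := by
    by_contra hne
    have hemp : IsEmpty X0 := not_nonempty_iff.mp hne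
    have h1 := M.eta_sum s0
    rw [Finset.univ_eq_empty, Finset.sum_empty] at h1
    norm_num at h1
  obtain ⟨xstar⟩ := hX0
  have hP : 0 ≤ P := le_trans (abs_nonneg _) (hreg.bound_C s0 0 Set.self_mem_Ici)
  have hQ : 0 ≤ Q := le_trans (hreg.U_bounds 0 xstar 0 s0 0).1 (hreg.U_bounds 0 xstar 0 s0 0).2
  have hB : 0 < M.B := M.B_pos
  set X : ℝ := (Fintype.card X0 : ℝ) with hXdef
  have hXnn : 0 ≤ X := by positivity
  have hQPB : 0 ≤ Q + 3 * P * M.B := by positivity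
  set c : ℝ := ((M.T : ℝ) + 1) * (X * (Q + 3 * P * M.B)) with hcdef
  have hcnn : 0 ≤ c := by positivity
  refine ⟨ε / (c + 1), by positivity, ?_⟩
  intro n hn ω hω ϑ
  set δ : ℝ := ε / (c + 1) with hδdef
  have hδ : 0 < δ := by positivity
  have hnR : (0:ℝ) < n := Nat.cast_pos.mpr hn
  -- per-history bound
  have key : ∀ h : ℕ → S,
      |M.welfProfile n ϑ.toHist ω h
        - (n:ℝ) * ∑ t ∈ Finset.range (M.T+1), M.contStageWelfare ϑ s0 h t| ≤ c * δ * n := by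
    intro h
    set An : ℕ → ℝ := fun t => ∑ x : X0, popState n ω x * ϑ.act t x h with hAndef
    have hagg : ∀ t, M.aggDemandAll n ϑ.toHist ω h t = (n:ℝ) * An t := by
      intro t
      have h1 : ∀ i : Fin n, (M.jointTraj n ϑ.toHist ω h t i).1 = ϑ.act t (ω i) h := by
        intro i; rw [joint_eq M n ϑ ω h t i]
      unfold aggDemandAll
      rw [Finset.sum_congr rfl fun i _ => h1 i, sum_fiber ω (fun x => ϑ.act t x h),
        hAndef, Finset.mul_sum]
      exact Finset.sum_congr rfl fun x _ => by rw [popState_mul M hn ω x]; ring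
    have hdivA : ∀ t, M.aggDemandAll n ϑ.toHist ω h t / (n:ℝ) = An t := by
      intro t; rw [hagg t]; field_simp
    have hpop1 : ∑ x : X0, popState n ω x = 1 := popState_sum hn ω
    have hact : ∀ t x, ϑ.act t x h ∈ Set.Icc (0:ℝ) M.B := fun t x => ϑ.act_mem t x h
    have hAnmem : ∀ t, An t ∈ Set.Icc (0:ℝ) M.B := by
      intro t
      constructor
      · exact Finset.sum_nonneg fun x _ => mul_nonneg (popState_nonneg ω x) (hact t x).1
      · calc An t ≤ ∑ x : X0, popState n ω x * M.B :=
              Finset.sum_le_sum fun x _ =>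
                mul_le_mul_of_nonneg_left (hact t x).2 (popState_nonneg ω x)
          _ = M.B := by rw [← Finset.sum_mul, hpop1, one_mul]
    have hAvmem : ∀ t, M.avgDemand ϑ s0 h t ∈ Set.Icc (0:ℝ) M.B := by
      intro t
      constructor
      · exact Finset.sum_nonneg fun x _ => mul_nonneg (M.eta_nonneg s0 x) (hact t x).1
      · calc M.avgDemand ϑ s0 h t ≤ ∑ x : X0, M.eta s0 x * M.B :=
              Finset.sum_le_sum fun x _ =>
                mul_le_mul_of_nonneg_left (hact t x).2 (M.eta_nonneg s0 x)
          _ = M.B := by rw [← Finset.sum_mul, M.eta_sum s0, one_mul]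
    have hclose : ∀ t, |An t - M.avgDemand ϑ s0 h t| ≤ X * (δ * M.B) := by
      intro t
      rw [hAndef]
      unfold avgDemand
      rw [← Finset.sum_sub_distrib]
      calc |∑ x : X0, (popState n ω x * ϑ.act t x h - M.eta s0 x * ϑ.act t x h)|
          ≤ ∑ x : X0, |popState n ω x * ϑ.act t x h - M.eta s0 x * ϑ.act t x h| :=
            Finset.abs_sum_le_sum_abs _ _
        _ ≤ ∑ _x : X0, δ * M.B := by
            refine Finset.sum_le_sum fun x _ => ?_
            rw [← sub_mul, abs_mul]
            exact mul_le_mul (hω x)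
              (by rw [abs_of_nonneg (hact t x).1]; exact (hact t x).2) (abs_nonneg _) hδ.le
        _ = X * (δ * M.B) := by
            rw [Finset.sum_const, Finset.card_univ, nsmul_eq_mul, hXdef]
    have lipC : ∀ s : S, ∀ a ∈ Set.Ici (0:ℝ), ∀ b ∈ Set.Ici (0:ℝ),
        |M.Cc a s - M.Cc b s| ≤ P * |a - b| :=
      fun s => lip_aux (hreg.deriv_C s) (hreg.bound_C s)
    have lipH0 : ∀ s : S, ∀ a ∈ Set.Ici (0:ℝ), ∀ b ∈ Set.Ici (0:ℝ),
        |M.Hc0 a s - M.Hc0 b s| ≤ P * |a - b| :=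
      fun s => lip_aux (hreg.deriv_H0 s) (hreg.bound_H0 s)
    have lipH1 : ∀ (s s' : S), ∀ A' ∈ Set.Icc (0:ℝ) M.B, ∀ a ∈ Set.Ici (0:ℝ),
        ∀ b ∈ Set.Ici (0:ℝ), |M.Hc a A' s s' - M.Hc b A' s s'| ≤ P * |a - b| :=
      fun s s' A' hA' => lip_aux (fun A hA => hreg.deriv_H1 s s' A' A hA)
        (fun A hA => hreg.bound_H1 s s' A' hA' A hA)
    have lipH2 : ∀ (s s' : S), ∀ A ∈ Set.Icc (0:ℝ) M.B, ∀ a ∈ Set.Ici (0:ℝ),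
        ∀ b ∈ Set.Ici (0:ℝ), |M.Hc A a s s' - M.Hc A b s s'| ≤ P * |a - b| :=
      fun s s' A hA => lip_aux (fun A' hA' => hreg.deriv_H2 s s' A A' hA')
        (fun A' hA' => hreg.bound_H2 s s' A hA A' hA')
    have hDC : ∀ t, |M.Cc (An t) (h t) - M.Cc (M.avgDemand ϑ s0 h t) (h t)|
        ≤ P * (X * (δ * M.B)) := by
      intro t
      refine (lipC (h t) (An t) (hAnmem t).1 (M.avgDemand ϑ s0 h t) (hAvmem t).1).trans ?_
      exact mul_le_mul_of_nonneg_left (hclose t) hP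
    have hDH0 : |M.Hc0 (An 0) (h 0) - M.Hc0 (M.avgDemand ϑ s0 h 0) (h 0)|
        ≤ P * (X * (δ * M.B)) := by
      refine (lipH0 (h 0) (An 0) (hAnmem 0).1 (M.avgDemand ϑ s0 h 0) (hAvmem 0).1).trans ?_
      exact mul_le_mul_of_nonneg_left (hclose 0) hP
    have hDH : ∀ p t, |M.Hc (An p) (An t) (h p) (h t)
        - M.Hc (M.avgDemand ϑ s0 h p) (M.avgDemand ϑ s0 h t) (h p) (h t)|
        ≤ 2 * (P * (X * (δ * M.B))) := by
      intro p t
      have e : M.Hc (An p) (An t) (h p) (h t)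
          - M.Hc (M.avgDemand ϑ s0 h p) (M.avgDemand ϑ s0 h t) (h p) (h t)
          = (M.Hc (An p) (An t) (h p) (h t)
              - M.Hc (M.avgDemand ϑ s0 h p) (An t) (h p) (h t))
            + (M.Hc (M.avgDemand ϑ s0 h p) (An t) (h p) (h t)
              - M.Hc (M.avgDemand ϑ s0 h p) (M.avgDemand ϑ s0 h t) (h p) (h t)) := by ring
      rw [e]
      have b1 : |M.Hc (An p) (An t) (h p) (h t)
          - M.Hc (M.avgDemand ϑ s0 h p) (An t) (h p) (h t)| ≤ P * (X * (δ * M.B)) := by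
        refine (lipH1 (h p) (h t) (An t) (hAnmem t) (An p) (hAnmem p).1
          (M.avgDemand ϑ s0 h p) (hAvmem p).1).trans ?_
        exact mul_le_mul_of_nonneg_left (hclose p) hP
      have b2 : |M.Hc (M.avgDemand ϑ s0 h p) (An t) (h p) (h t)
          - M.Hc (M.avgDemand ϑ s0 h p) (M.avgDemand ϑ s0 h t) (h p) (h t)|
          ≤ P * (X * (δ * M.B)) := by
        refine (lipH2 (h p) (h t) (M.avgDemand ϑ s0 h p) (hAvmem p) (An t) (hAnmem t).1
          (M.avgDemand ϑ s0 h t) (hAvmem t).1).trans ?_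
        exact mul_le_mul_of_nonneg_left (hclose t) hP
      calc |_ + _| ≤ _ + _ := abs_add_le _ _
        _ ≤ 2 * (P * (X * (δ * M.B))) := by linarith
    have hUsum : ∀ t, (∑ i : Fin n, M.U t (ω i) (M.jointTraj n ϑ.toHist ω h t i).2 (h t)
          (M.jointTraj n ϑ.toHist ω h t i).1)
        = (n:ℝ) * ∑ x : X0, popState n ω x *
            M.U t x (M.zTraj x h (fun τ => ϑ.act τ x h) t) (h t) (ϑ.act t x h) := by
      intro t
      have h1 : ∀ i : Fin n, M.U t (ω i) (M.jointTraj n ϑ.toHist ω h t i).2 (h t)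
            (M.jointTraj n ϑ.toHist ω h t i).1
          = (fun x => M.U t x (M.zTraj x h (fun τ => ϑ.act τ x h) t) (h t) (ϑ.act t x h))
              (ω i) := by
        intro i; rw [joint_eq M n ϑ ω h t i]
      rw [Finset.sum_congr rfl fun i _ => h1 i, sum_fiber ω
        (fun x => M.U t x (M.zTraj x h (fun τ => ϑ.act τ x h) t) (h t) (ϑ.act t x h)),
        Finset.mul_sum]
      exact Finset.sum_congr rfl fun x _ => by rw [popState_mul M hn ω x]; ring
    have hDU : ∀ t, |(n:ℝ) * (∑ x : X0, popState n ω x *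
          M.U t x (M.zTraj x h (fun τ => ϑ.act τ x h) t) (h t) (ϑ.act t x h))
        - (n:ℝ) * (∑ x : X0, M.eta s0 x *
          M.U t x (M.zTraj x h (fun τ => ϑ.act τ x h) t) (h t) (ϑ.act t x h))|
        ≤ (n:ℝ) * (X * (δ * Q)) := by
      intro t
      rw [← mul_sub, abs_mul, abs_of_nonneg hnR.le, ← Finset.sum_sub_distrib]
      refine mul_le_mul_of_nonneg_left ?_ hnR.le
      calc |∑ x : X0, (popState n ω x *
              M.U t x (M.zTraj x h (fun τ => ϑ.act τ x h) t) (h t) (ϑ.act t x h)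
            - M.eta s0 x *
              M.U t x (M.zTraj x h (fun τ => ϑ.act τ x h) t) (h t) (ϑ.act t x h))|
          ≤ ∑ x : X0, |popState n ω x *
              M.U t x (M.zTraj x h (fun τ => ϑ.act τ x h) t) (h t) (ϑ.act t x h)
            - M.eta s0 x *
              M.U t x (M.zTraj x h (fun τ => ϑ.act τ x h) t) (h t) (ϑ.act t x h)| :=
            Finset.abs_sum_le_sum_abs _ _
        _ ≤ ∑ _x : X0, δ * Q := by
            refine Finset.sum_le_sum fun x _ => ?_
            rw [← sub_mul, abs_mul]
            have hu := hreg.U_bounds t x (M.zTraj x h (fun τ => ϑ.act τ x h) t) (h t)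
              (ϑ.act t x h)
            exact mul_le_mul (hω x) (by rw [abs_of_nonneg hu.1]; exact hu.2)
              (abs_nonneg _) hδ.le
        _ = X * (δ * Q) := by rw [Finset.sum_const, Finset.card_univ, nsmul_eq_mul, hXdef]
    have hnXδPB : 0 ≤ (n:ℝ) * (X * (δ * (P * M.B))) := by positivity
    have stagebound : ∀ t ∈ Finset.range (M.T + 1),
        |((∑ i : Fin n, M.U t (ω i) (M.jointTraj n ϑ.toHist ω h t i).2 (h t)
              (M.jointTraj n ϑ.toHist ω h t i).1)
          - (n:ℝ) * M.Cc (M.aggDemandAll n ϑ.toHist ω h t / n) (h t)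
          - (if t = 0 then (n:ℝ) * M.Hc0 (M.aggDemandAll n ϑ.toHist ω h 0 / n) (h 0)
              else (n:ℝ) * M.Hc (M.aggDemandAll n ϑ.toHist ω h (t-1) / n)
                (M.aggDemandAll n ϑ.toHist ω h t / n) (h (t-1)) (h t)))
          - (n:ℝ) * M.contStageWelfare ϑ s0 h t|
        ≤ (n:ℝ) * (X * (δ * (Q + 3 * P * M.B))) := by
      intro t _
      simp only [hUsum, hdivA, contStageWelfare]
      obtain rfl | ⟨t', rfl⟩ : t = 0 ∨ ∃ t', t = t' + 1 := by
        cases t with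
        | zero => exact Or.inl rfl
        | succ t' => exact Or.inr ⟨t', rfl⟩
      · simp only [if_pos rfl]
        have b2 : |(n:ℝ) * M.Cc (An 0) (h 0) - (n:ℝ) * M.Cc (M.avgDemand ϑ s0 h 0) (h 0)|
            ≤ (n:ℝ) * (P * (X * (δ * M.B))) := by
          rw [← mul_sub, abs_mul, abs_of_nonneg hnR.le]
          exact mul_le_mul_of_nonneg_left (hDC 0) hnR.le
        have b3 : |(n:ℝ) * M.Hc0 (An 0) (h 0)
              - (n:ℝ) * M.Hc0 (M.avgDemand ϑ s0 h 0) (h 0)|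
            ≤ (n:ℝ) * (P * (X * (δ * M.B))) := by
          rw [← mul_sub, abs_mul, abs_of_nonneg hnR.le]
          exact mul_le_mul_of_nonneg_left hDH0 hnR.le
        refine le_trans (tri3 (hDU 0) b2 b3) ?_
        nlinarith [hnXδPB]
      · simp only [Nat.succ_ne_zero, if_false, Nat.add_sub_cancel]
        have b2 : |(n:ℝ) * M.Cc (An (t'+1)) (h (t'+1))
              - (n:ℝ) * M.Cc (M.avgDemand ϑ s0 h (t'+1)) (h (t'+1))|
            ≤ (n:ℝ) * (P * (X * (δ * M.B))) := by
          rw [← mul_sub, abs_mul, abs_of_nonneg hnR.le]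
          exact mul_le_mul_of_nonneg_left (hDC (t'+1)) hnR.le
        have b3 : |(n:ℝ) * M.Hc (An t') (An (t'+1)) (h t') (h (t'+1))
              - (n:ℝ) * M.Hc (M.avgDemand ϑ s0 h t') (M.avgDemand ϑ s0 h (t'+1))
                (h t') (h (t'+1))|
            ≤ (n:ℝ) * (2 * (P * (X * (δ * M.B)))) := by
          rw [← mul_sub, abs_mul, abs_of_nonneg hnR.le]
          exact mul_le_mul_of_nonneg_left (hDH t' (t'+1)) hnR.le
        refine le_trans (tri3 (hDU (t'+1)) b2 b3) ?_
        nlinarith [hnXδPB]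
    calc |M.welfProfile n ϑ.toHist ω h
          - (n:ℝ) * ∑ t ∈ Finset.range (M.T+1), M.contStageWelfare ϑ s0 h t|
        = |∑ t ∈ Finset.range (M.T+1),
            (((∑ i : Fin n, M.U t (ω i) (M.jointTraj n ϑ.toHist ω h t i).2 (h t)
                (M.jointTraj n ϑ.toHist ω h t i).1)
              - (n:ℝ) * M.Cc (M.aggDemandAll n ϑ.toHist ω h t / n) (h t)
              - (if t = 0 then (n:ℝ) * M.Hc0 (M.aggDemandAll n ϑ.toHist ω h 0 / n) (h 0)
                  else (n:ℝ) * M.Hc (M.aggDemandAll n ϑ.toHist ω h (t-1) / n)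
                    (M.aggDemandAll n ϑ.toHist ω h t / n) (h (t-1)) (h t)))
              - (n:ℝ) * M.contStageWelfare ϑ s0 h t)| := by
          rw [welfProfile, Finset.mul_sum, ← Finset.sum_sub_distrib]
      _ ≤ ∑ t ∈ Finset.range (M.T+1),
            |((∑ i : Fin n, M.U t (ω i) (M.jointTraj n ϑ.toHist ω h t i).2 (h t)
                (M.jointTraj n ϑ.toHist ω h t i).1)
              - (n:ℝ) * M.Cc (M.aggDemandAll n ϑ.toHist ω h t / n) (h t)
              - (if t = 0 then (n:ℝ) * M.Hc0 (M.aggDemandAll n ϑ.toHist ω h 0 / n) (h 0)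
                  else (n:ℝ) * M.Hc (M.aggDemandAll n ϑ.toHist ω h (t-1) / n)
                    (M.aggDemandAll n ϑ.toHist ω h t / n) (h (t-1)) (h t)))
              - (n:ℝ) * M.contStageWelfare ϑ s0 h t| := Finset.abs_sum_le_sum_abs _ _
      _ ≤ ∑ _t ∈ Finset.range (M.T+1), (n:ℝ) * (X * (δ * (Q + 3 * P * M.B))) :=
          Finset.sum_le_sum stagebound
      _ = ((M.T + 1 : ℕ) : ℝ) * ((n:ℝ) * (X * (δ * (Q + 3 * P * M.B)))) := by
          rw [Finset.sum_const, Finset.card_range, nsmul_eq_mul]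
      _ = c * δ * n := by rw [hcdef]; push_cast; ring
  -- assemble over histories
  have hcδ : c * δ ≤ ε := by
    rw [hδdef]
    calc c * (ε / (c + 1)) = ε * (c / (c + 1)) := by ring
      _ ≤ ε * 1 := mul_le_mul_of_nonneg_left
          ((div_le_one (by positivity)).mpr (by linarith)) hε.le
      _ = ε := mul_one ε
  unfold contWelfare expectHist
  have hre : ∀ g : Fin (M.T + 1) → S,
      M.histProb s0 (M.extendHist g) * M.welfProfile n ϑ.toHist ω (M.extendHist g)
        - (n:ℝ) * (M.histProb s0 (M.extendHist g) *
            ∑ t ∈ Finset.range (M.T+1), M.contStageWelfare ϑ s0 (M.extendHist g) t)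
      = M.histProb s0 (M.extendHist g) * (M.welfProfile n ϑ.toHist ω (M.extendHist g)
          - (n:ℝ) * ∑ t ∈ Finset.range (M.T+1), M.contStageWelfare ϑ s0 (M.extendHist g) t) := by
    intro g; ring
  rw [Finset.mul_sum, ← Finset.sum_sub_distrib, Finset.sum_congr rfl fun g _ => hre g]
  calc |∑ g : Fin (M.T + 1) → S,
        M.histProb s0 (M.extendHist g) * (M.welfProfile n ϑ.toHist ω (M.extendHist g)
          - (n:ℝ) * ∑ t ∈ Finset.range (M.T+1), M.contStageWelfare ϑ s0 (M.extendHist g) t)|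
      ≤ ∑ g : Fin (M.T + 1) → S,
        |M.histProb s0 (M.extendHist g) * (M.welfProfile n ϑ.toHist ω (M.extendHist g)
          - (n:ℝ) * ∑ t ∈ Finset.range (M.T+1), M.contStageWelfare ϑ s0 (M.extendHist g) t)| :=
        Finset.abs_sum_le_sum_abs _ _
    _ ≤ ∑ g : Fin (M.T + 1) → S, M.histProb s0 (M.extendHist g) * (c * δ * n) := by
        refine Finset.sum_le_sum fun g _ => ?_
        rw [abs_mul, abs_of_nonneg (M.histProb_nonneg s0 (M.extendHist g))]
        exact mul_le_mul_of_nonneg_left (key (M.extendHist g))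
          (M.histProb_nonneg s0 (M.extendHist g))
    _ = c * δ * n := by rw [← Finset.sum_mul, M.sum_histProb s0, one_mul]
    _ ≤ ε * n := mul_le_mul_of_nonneg_right hcδ hnR.le
end
end

section
/- In the two-stage deterministic market with one consumer and one supplier, there exists a competitive equilibrium: there exist a₀, a₁ ∈ (0,B) satisfying the first-order conditions U₀′(a₀) = C′(a₀) − H′(a₁ − a₀) and U₁′(a₁) = C′(a₁) + H′(a₁ − a₀); moreover, (a₀, a₁) maximizes the social welfare W(x₀,x₁) = U₀(x₀) + U₁(x₁) − C(x₀) − C(x₁) − H(x₁ − x₀) over [0,B]². -/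
open Set

/-- If `g` has a maximum on `[0,B]` at `0` and a derivative `d` within `[0,B]` at `0`,
then `d ≤ 0`. -/
lemma aux_endpoint_left {g : ℝ → ℝ} {B d : ℝ} (hB : 0 < B)
    (hg : HasDerivWithinAt g d (Set.Icc 0 B) 0)
    (hmax : IsMaxOn g (Set.Icc 0 B) 0) : d ≤ 0 := by
  have hseg : segment ℝ (0 : ℝ) (0 + B) ⊆ Set.Icc 0 B := by
    rw [zero_add, segment_eq_Icc hB.le]
  have hy : B ∈ posTangentConeAt (Set.Icc (0:ℝ) B) 0 :=
    mem_posTangentConeAt_of_segment_subset hseg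
  have hloc : IsLocalMaxOn g (Set.Icc 0 B) 0 := hmax.filter_mono inf_le_right
  have := hloc.hasFDerivWithinAt_nonpos hg hy
  simpa [smul_eq_mul] using nonpos_of_mul_nonpos_right this hB
  
/-- If `g` has a maximum on `[0,B]` at `B` and a derivative `d` within `[0,B]` at `B`,
then `0 ≤ d`. -/
lemma aux_endpoint_right {g : ℝ → ℝ} {B d : ℝ} (hB : 0 < B)
    (hg : HasDerivWithinAt g d (Set.Icc 0 B) B)
    (hmax : IsMaxOn g (Set.Icc 0 B) B) : 0 ≤ d := by
  have hseg : segment ℝ B (B + (-B)) ⊆ Set.Icc 0 B := by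
    rw [add_neg_cancel, segment_symm, segment_eq_Icc hB.le]
  have hy : (-B) ∈ posTangentConeAt (Set.Icc (0:ℝ) B) B :=
    mem_posTangentConeAt_of_segment_subset hseg
  have hloc : IsLocalMaxOn g (Set.Icc 0 B) B := hmax.filter_mono inf_le_right
  have := hloc.hasFDerivWithinAt_nonpos hg hy
  simp only [ContinuousLinearMap.toSpanSingleton_apply,
    smul_eq_mul] at this
  nlinarith

/-- Example 1 of the paper. In the two-stage deterministic market with
one consumer and one supplier (concave, continuously differentiable utilities `U0, U1`
on `[0,∞)` with derivative functions `dU0, dU1`; convex, continuously differentiable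
costs `C` on `[0,∞)` and `H` on `ℝ` with derivatives `dC`, `dH`; `H'(0) = 0`;
`U_t'(0) > C'(0)` and `U_t'(B) < C'(B)` for `t = 0,1`), there exists a competitive
equilibrium: there exist `a0, a1 ∈ (0,B)` satisfying the first-order conditions
`U0'(a0) = C'(a0) - H'(a1 - a0)` and `U1'(a1) = C'(a1) + H'(a1 - a0)`; moreover
`(a0, a1)` maximizes the social welfare
`W(x0,x1) = U0 x0 + U1 x1 - C x0 - C x1 - H (x1 - x0)` over `[0,B]²`. -/
theorem two_stage_competitive_equilibrium_exists
    (B : ℝ) (hB : 0 < B)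
    (U0 U1 C H : ℝ → ℝ) (dU0 dU1 dC dH : ℝ → ℝ)
    (hU0nonneg : ∀ x ∈ Set.Ici (0 : ℝ), 0 ≤ U0 x)
    (hU1nonneg : ∀ x ∈ Set.Ici (0 : ℝ), 0 ≤ U1 x)
    (hCnonneg : ∀ x ∈ Set.Ici (0 : ℝ), 0 ≤ C x)
    (hHnonneg : ∀ x : ℝ, 0 ≤ H x)
    (hU0conc : ConcaveOn ℝ (Set.Ici 0) U0)
    (hU1conc : ConcaveOn ℝ (Set.Ici 0) U1)
    (hCconv : ConvexOn ℝ (Set.Ici 0) C)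
    (hHconv : ConvexOn ℝ Set.univ H)
    (hdU0 : ∀ x ∈ Set.Ici (0 : ℝ), HasDerivWithinAt U0 (dU0 x) (Set.Ici 0) x)
    (hdU1 : ∀ x ∈ Set.Ici (0 : ℝ), HasDerivWithinAt U1 (dU1 x) (Set.Ici 0) x)
    (hdC : ∀ x ∈ Set.Ici (0 : ℝ), HasDerivWithinAt C (dC x) (Set.Ici 0) x)
    (hdH : ∀ x : ℝ, HasDerivAt H (dH x) x)
    (hdU0cont : ContinuousOn dU0 (Set.Ici 0))
    (hdU1cont : ContinuousOn dU1 (Set.Ici 0))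
    (hdCcont : ContinuousOn dC (Set.Ici 0))
    (hdHcont : Continuous dH)
    (hdH0 : dH 0 = 0)
    (h00 : dC 0 < dU0 0) (h0B : dU0 B < dC B)
    (h10 : dC 0 < dU1 0) (h1B : dU1 B < dC B) :
    ∃ a0 ∈ Set.Ioo (0 : ℝ) B, ∃ a1 ∈ Set.Ioo (0 : ℝ) B,
      dU0 a0 = dC a0 - dH (a1 - a0) ∧
      dU1 a1 = dC a1 + dH (a1 - a0) ∧
      ∀ x0 ∈ Set.Icc (0 : ℝ) B, ∀ x1 ∈ Set.Icc (0 : ℝ) B,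
        U0 x0 + U1 x1 - C x0 - C x1 - H (x1 - x0) ≤
          U0 a0 + U1 a1 - C a0 - C a1 - H (a1 - a0) := by
  -- continuity of the data
  have hIcc : Set.Icc (0:ℝ) B ⊆ Set.Ici 0 := Set.Icc_subset_Ici_self
  have hU0c : ContinuousOn U0 (Set.Ici 0) := fun x hx => (hdU0 x hx).continuousWithinAt
  have hU1c : ContinuousOn U1 (Set.Ici 0) := fun x hx => (hdU1 x hx).continuousWithinAt
  have hCc : ContinuousOn C (Set.Ici 0) := fun x hx => (hdC x hx).continuousWithinAt
  have hHc : Continuous H := by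
    rw [continuous_iff_continuousAt]; exact fun x => (hdH x).continuousAt
  -- monotonicity of dH
  have hmono : Monotone dH := by
    have h := hHconv.monotoneOn_deriv (fun x _ => (hdH x).differentiableAt)
    intro x y hxy
    rw [← (hdH x).deriv, ← (hdH y).deriv]
    exact h (Set.mem_univ x) (Set.mem_univ y) hxy
  have hdHpos : ∀ x : ℝ, 0 ≤ x → 0 ≤ dH x := fun x hx => hdH0 ▸ hmono hx
  have hdHneg : ∀ x : ℝ, x ≤ 0 → dH x ≤ 0 := fun x hx => hdH0 ▸ hmono hx
  -- the welfare function and compactness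
  set K : Set (ℝ × ℝ) := Set.Icc 0 B ×ˢ Set.Icc 0 B with hK
  set W : ℝ × ℝ → ℝ := fun p => U0 p.1 + U1 p.2 - C p.1 - C p.2 - H (p.2 - p.1) with hW
  have hcomp : IsCompact K := isCompact_Icc.prod isCompact_Icc
  have hfst : ∀ p ∈ K, p.1 ∈ Set.Ici (0:ℝ) := fun p hp => hIcc hp.1
  have hsnd : ∀ p ∈ K, p.2 ∈ Set.Ici (0:ℝ) := fun p hp => hIcc hp.2
  have hWc : ContinuousOn W K := by
    apply ContinuousOn.sub
    apply ContinuousOn.sub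
    apply ContinuousOn.sub
    apply ContinuousOn.add
    · exact hU0c.comp continuousOn_fst hfst
    · exact hU1c.comp continuousOn_snd hsnd
    · exact hCc.comp continuousOn_fst hfst
    · exact hCc.comp continuousOn_snd hsnd
    · exact (hHc.comp (continuous_snd.sub continuous_fst)).continuousOn
  have hne : K.Nonempty := ⟨(0, 0), ⟨Set.left_mem_Icc.2 hB.le, Set.left_mem_Icc.2 hB.le⟩⟩
  obtain ⟨⟨a0, a1⟩, hmem, hmax⟩ := hcomp.exists_isMaxOn hne hWc
  obtain ⟨ha0, ha1⟩ := hmem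
  -- slice functions and their derivatives
  have hg0d : ∀ x ∈ Set.Icc (0:ℝ) B,
      HasDerivWithinAt (fun x => W (x, a1)) (dU0 x - dC x + dH (a1 - x)) (Set.Icc 0 B) x := by
    intro x hx
    have hH' : HasDerivAt (fun x : ℝ => H (a1 - x)) (dH (a1 - x) * (0 - 1)) x :=
      (hdH (a1 - x)).comp x ((hasDerivAt_const x a1).sub (hasDerivAt_id x))
    have := ((((hdU0 x (hIcc hx)).add_const (U1 a1)).sub (hdC x (hIcc hx))).sub_const
      (C a1)).sub hH'.hasDerivWithinAt
    exact (this.mono hIcc).congr_deriv (by ring)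
  have hg1d : ∀ y ∈ Set.Icc (0:ℝ) B,
      HasDerivWithinAt (fun y => W (a0, y)) (dU1 y - dC y - dH (y - a0)) (Set.Icc 0 B) y := by
    intro y hy
    have hH' : HasDerivAt (fun y : ℝ => H (y - a0)) (dH (y - a0) * (1 - 0)) y :=
      (hdH (y - a0)).comp y ((hasDerivAt_id y).sub (hasDerivAt_const y a0))
    have := ((((hdU1 y (hIcc hy)).const_add (U0 a0)).sub_const (C a0)).sub
      (hdC y (hIcc hy))).sub hH'.hasDerivWithinAt
    exact (this.mono hIcc).congr_deriv (by ring)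
  have hmax0 : IsMaxOn (fun x => W (x, a1)) (Set.Icc 0 B) a0 :=
    fun x hx => hmax (Set.mk_mem_prod hx ha1)
  have hmax1 : IsMaxOn (fun y => W (a0, y)) (Set.Icc 0 B) a1 :=
    fun y hy => hmax (Set.mk_mem_prod ha0 hy)
  -- a0 is interior
  have ha0ne0 : a0 ≠ 0 := by
    intro h; subst h
    have hd := aux_endpoint_left hB (hg0d 0 (Set.left_mem_Icc.2 hB.le)) hmax0
    have := hdHpos (a1 - 0) (by simpa using ha1.1)
    linarith
  have ha0neB : a0 ≠ B := by
    intro h; subst h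
    have hd := aux_endpoint_right hB (hg0d a0 (Set.right_mem_Icc.2 hB.le)) hmax0
    have := hdHneg (a1 - a0) (by linarith [ha1.2])
    linarith
  have ha1ne0 : a1 ≠ 0 := by
    intro h; subst h
    have hd := aux_endpoint_left hB (hg1d 0 (Set.left_mem_Icc.2 hB.le)) hmax1
    have := hdHneg (0 - a0) (by linarith [ha0.1])
    linarith
  have ha1neB : a1 ≠ B := by
    intro h; subst h
    have hd := aux_endpoint_right hB (hg1d a1 (Set.right_mem_Icc.2 hB.le)) hmax1
    have := hdHpos (a1 - a0) (by linarith [ha0.2])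
    linarith
  have ha0' : a0 ∈ Set.Ioo (0:ℝ) B := ⟨ha0.1.lt_of_ne (Ne.symm ha0ne0), ha0.2.lt_of_ne ha0neB⟩
  have ha1' : a1 ∈ Set.Ioo (0:ℝ) B := ⟨ha1.1.lt_of_ne (Ne.symm ha1ne0), ha1.2.lt_of_ne ha1neB⟩
  have hnhds0 : Set.Icc (0:ℝ) B ∈ nhds a0 := Icc_mem_nhds ha0'.1 ha0'.2
  have hnhds1 : Set.Icc (0:ℝ) B ∈ nhds a1 := Icc_mem_nhds ha1'.1 ha1'.2
  -- first-order conditions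
  have foc0 : dU0 a0 - dC a0 + dH (a1 - a0) = 0 :=
    (hmax0.isLocalMax hnhds0).hasDerivAt_eq_zero ((hg0d a0 ha0).hasDerivAt hnhds0)
  have foc1 : dU1 a1 - dC a1 - dH (a1 - a0) = 0 :=
    (hmax1.isLocalMax hnhds1).hasDerivAt_eq_zero ((hg1d a1 ha1).hasDerivAt hnhds1)
  exact ⟨a0, ha0', a1, ha1', by linarith, by linarith,
    fun x0 hx0 x1 hx1 => hmax (Set.mk_mem_prod hx0 hx1)⟩
end

section
/- Marginal cost pricing is not socially optimal in the presence of ancillary costs: in the two-stage deterministic market, suppose (a₀,a₁) ∈ (0,B)² satisfies the socially optimal first-order conditions U₀′(a₀) = C′(a₀) − H′(a₁ − a₀) and U₁′(a₁) = C′(a₁) + H′(a₁ − a₀), and that H′(a₁ − a₀) > 0. Then under the marginal cost prices p̂₀ = C′(a₀) and p̂₁ = C′(a₁) + H′(a₁ − a₀), the socially optimal point (a₀,a₁) does NOT maximize the consumer's payoff U₀(x₀) − p̂₀ x₀ + U₁(x₁) − p̂₁ x₁ over (x₀,x₁) ∈ [0,B]²; in particular U₀′(a₀) < p̂₀, so the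 consumer strictly gains by reducing her stage-0 demand below a₀. -/
/-- Marginal cost pricing is not socially optimal in the presence of
ancillary costs: if `(a0, a1) ∈ (0,B)²` satisfies the socially optimal first-order
conditions `U0'(a0) = C'(a0) - H'(a1 - a0)` and `U1'(a1) = C'(a1) + H'(a1 - a0)`, and
`H'(a1 - a0) > 0`, then under the marginal cost prices `p̂0 = C'(a0)` and
`p̂1 = C'(a1) + H'(a1 - a0)` the point `(a0, a1)` does NOT maximize the consumer's payoff
`U0 x0 - p̂0 x0 + U1 x1 - p̂1 x1` over `[0,B]²`; in particular `U0'(a0) < p̂0`, and the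
consumer strictly gains by reducing her stage-0 demand below `a0`. -/
theorem marginal_cost_pricing_not_socially_optimal
    (B : ℝ) (hB : 0 < B)
    (U0 U1 C H : ℝ → ℝ) (dU0 dU1 dC dH : ℝ → ℝ)
    (hU0nonneg : ∀ x ∈ Set.Ici (0 : ℝ), 0 ≤ U0 x)
    (hU1nonneg : ∀ x ∈ Set.Ici (0 : ℝ), 0 ≤ U1 x)
    (hCnonneg : ∀ x ∈ Set.Ici (0 : ℝ), 0 ≤ C x)
    (hHnonneg : ∀ x : ℝ, 0 ≤ H x)
    (hU0conc : ConcaveOn ℝ (Set.Ici 0) U0)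
    (hU1conc : ConcaveOn ℝ (Set.Ici 0) U1)
    (hCconv : ConvexOn ℝ (Set.Ici 0) C)
    (hHconv : ConvexOn ℝ Set.univ H)
    (hdU0 : ∀ x ∈ Set.Ici (0 : ℝ), HasDerivWithinAt U0 (dU0 x) (Set.Ici 0) x)
    (hdU1 : ∀ x ∈ Set.Ici (0 : ℝ), HasDerivWithinAt U1 (dU1 x) (Set.Ici 0) x)
    (hdC : ∀ x ∈ Set.Ici (0 : ℝ), HasDerivWithinAt C (dC x) (Set.Ici 0) x)
    (hdH : ∀ x : ℝ, HasDerivAt H (dH x) x)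
    (hdU0cont : ContinuousOn dU0 (Set.Ici 0))
    (hdU1cont : ContinuousOn dU1 (Set.Ici 0))
    (hdCcont : ContinuousOn dC (Set.Ici 0))
    (hdHcont : Continuous dH)
    (a0 a1 : ℝ) (ha0 : a0 ∈ Set.Ioo (0 : ℝ) B) (ha1 : a1 ∈ Set.Ioo (0 : ℝ) B)
    (hfoc0 : dU0 a0 = dC a0 - dH (a1 - a0))
    (hfoc1 : dU1 a1 = dC a1 + dH (a1 - a0))
    (hH'pos : 0 < dH (a1 - a0)) :
    ¬ (∀ x0 ∈ Set.Icc (0 : ℝ) B, ∀ x1 ∈ Set.Icc (0 : ℝ) B,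
        U0 x0 - dC a0 * x0 + (U1 x1 - (dC a1 + dH (a1 - a0)) * x1) ≤
          U0 a0 - dC a0 * a0 + (U1 a1 - (dC a1 + dH (a1 - a0)) * a1)) ∧
    dU0 a0 < dC a0 ∧
    ∃ x0 ∈ Set.Ico (0 : ℝ) a0,
      U0 a0 - dC a0 * a0 < U0 x0 - dC a0 * x0 := by
  obtain ⟨ha0pos, ha0B⟩ := ha0
  have hlt : dU0 a0 < dC a0 := by
    rw [hfoc0]; linarith
  -- derivative of f := U0 x - dC a0 * x at a0
  have hU0' : HasDerivAt U0 (dU0 a0) a0 :=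
    (hdU0 a0 (le_of_lt ha0pos)).hasDerivAt (Ici_mem_nhds ha0pos)
  set f : ℝ → ℝ := fun x => U0 x - dC a0 * x with hf
  have hf' : HasDerivAt f (dU0 a0 - dC a0) a0 := by
    have : HasDerivAt (fun x : ℝ => dC a0 * x) (dC a0) a0 := by
      simpa using (hasDerivAt_id a0).const_mul (dC a0)
    exact hU0'.sub this
  have hd : dU0 a0 - dC a0 < 0 := by linarith
  have hslope : Filter.Tendsto (slope f a0) (nhdsWithin a0 {a0}ᶜ) (nhds (dU0 a0 - dC a0)) :=
    hasDerivAt_iff_tendsto_slope.mp hf'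
  have h1 : ∀ᶠ x in nhdsWithin a0 (Set.Iio a0), slope f a0 x < 0 := by
    have := hslope.eventually_lt_const hd
    exact this.filter_mono (nhdsWithin_mono a0 (fun x hx => ne_of_lt hx))
  have h2 : ∀ᶠ x in nhdsWithin a0 (Set.Iio a0), 0 < x :=
    eventually_nhdsWithin_of_eventually_nhds (eventually_gt_nhds ha0pos)
  have h3 : ∀ᶠ x in nhdsWithin a0 (Set.Iio a0), x < a0 :=
    eventually_mem_nhdsWithin.mono (fun x hx => hx)
  obtain ⟨x, hx1, hx2, hx3⟩ := (h1.and (h2.and h3)).exists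
  have hxne : x - a0 ≠ 0 := by linarith
  have hfx : f a0 < f x := by
    have hs : slope f a0 x = (f x - f a0) / (x - a0) := by
      simp [slope, vsub_eq_sub, div_eq_inv_mul]
    rw [hs] at hx1
    have := (div_neg_iff).mp hx1
    rcases this with ⟨h, h'⟩ | ⟨h, h'⟩
    · linarith
    · linarith
  refine ⟨?_, hlt, x, ⟨le_of_lt hx2, hx3⟩, by simpa [hf] using hfx⟩
  intro hmax
  have := hmax x ⟨le_of_lt hx2, le_of_lt (hx3.trans ha0B)⟩ a1 ⟨le_of_lt ha1.1, le_of_lt ha1.2⟩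
  have hfx' : U0 a0 - dC a0 * a0 < U0 x - dC a0 * x := by simpa [hf] using hfx
  linarith
end
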